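/- arXiv:2403.13998 — 6 statements merged into one kernel-verified Lean document; each statement's English description precedes it below -/
import Mathlib

section
/- Let f : ℝ × ℝ → ℝ be Lipschitz continuous in its first argument with constant L_f, 2π-periodic in its first argument, and continuous in its second argument; let D : ℝ → ℝ be Lipschitz continuous with constant L_D, 2π-periodic, and satisfy |D(u)| ≤ 1 for all u; let W : [0,1]² → [0,1] be continuous and symmetric. Then for every θ₀ ∈ C⁰([0,1]) the continuum dynamical system ∂ₜθ(t,x) = f(θ(t,x),t) + ∫₀¹ W(x,y) D(θ(t,y) − θ(t,x)) dy admits a unique global-in-time solution θ ∈ C¹([0,∞), C⁰([0,1])) with θ(0,·) = θ₀. -/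
open MeasureTheory Set

/-- `θ : ℝ → C([0,1],ℝ)` is a global-in-time solution of the continuum dynamical system
`∂ₜθ(t,x) = f(θ(t,x),t) + ∫₀¹ W(x,y) D(θ(t,y) − θ(t,x)) dy` on `[0,∞)` with initial
condition `θ₀`: a continuously differentiable curve in the Banach space `C([0,1],ℝ)`
satisfying the equation for all `t ≥ 0` and `x ∈ [0,1]`. -/
def IsCDSSolution (f : ℝ → ℝ → ℝ) (D : ℝ → ℝ)
    (W : Icc (0:ℝ) 1 → Icc (0:ℝ) 1 → ℝ) (θ₀ : C(Icc (0:ℝ) 1, ℝ))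
    (θ : ℝ → C(Icc (0:ℝ) 1, ℝ)) : Prop :=
  θ 0 = θ₀ ∧
  ∃ v : ℝ → C(Icc (0:ℝ) 1, ℝ),
    ContinuousOn v (Ici 0) ∧
    (∀ t ∈ Ici (0:ℝ), HasDerivWithinAt θ (v t) (Ici 0) t) ∧
    (∀ t ∈ Ici (0:ℝ), ∀ x : Icc (0:ℝ) 1,
      v t x = f (θ t x) t + ∫ y : Icc (0:ℝ) 1, W x y * D (θ t y - θ t x))

/-- Existence and uniqueness of a global-in-time solution of the continuum dynamical
system, under the regularity assumptions on `f`, `D` and `W`. -/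
theorem statement0 (Lf LD : NNReal) (f : ℝ → ℝ → ℝ) (D : ℝ → ℝ)
    (W : Icc (0:ℝ) 1 → Icc (0:ℝ) 1 → ℝ)
    (hf_lip : ∀ t, LipschitzWith Lf fun u => f u t)
    (hf_per : ∀ u t, f (u + 2 * Real.pi) t = f u t)
    (hf_cont : ∀ u, Continuous fun t => f u t)
    (hD_lip : LipschitzWith LD D)
    (hD_per : ∀ u, D (u + 2 * Real.pi) = D u)
    (hD_bdd : ∀ u, |D u| ≤ 1)
    (hW_cont : Continuous fun p : Icc (0:ℝ) 1 × Icc (0:ℝ) 1 => W p.1 p.2)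
    (hW_mem : ∀ x y, W x y ∈ Icc (0:ℝ) 1)
    (hW_symm : ∀ x y, W x y = W y x)
    (θ₀ : C(Icc (0:ℝ) 1, ℝ)) :
    (∃ θ : ℝ → C(Icc (0:ℝ) 1, ℝ), IsCDSSolution f D W θ₀ θ) ∧
      ∀ θ₁ θ₂ : ℝ → C(Icc (0:ℝ) 1, ℝ),
        IsCDSSolution f D W θ₀ θ₁ → IsCDSSolution f D W θ₀ θ₂ →
          ∀ t ∈ Ici (0:ℝ), θ₁ t = θ₂ t := by
  classical
  set K : NNReal := Lf + 2 * LD with hK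
  -- measure of the unit interval
  have hμ : (volume (univ : Set (Icc (0:ℝ) 1))).toReal = 1 := by
    simp [measure_univ]
  -- continuity of the integrand in `y`
  have hcy : ∀ (u : C(Icc (0:ℝ) 1, ℝ)) (x : Icc (0:ℝ) 1),
      Continuous fun y : Icc (0:ℝ) 1 => W x y * D (u y - u x) := fun u x =>
    (hW_cont.comp (continuous_const.prodMk continuous_id)).mul
      (hD_lip.continuous.comp ((map_continuous u).sub continuous_const))
  -- bound on the integrand
  have hbd : ∀ (u : C(Icc (0:ℝ) 1, ℝ)) (x y : Icc (0:ℝ) 1),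
      ‖W x y * D (u y - u x)‖ ≤ 1 := by
    intro u x y
    rw [Real.norm_eq_abs, abs_mul]
    have h1 : |W x y| ≤ 1 := abs_le.2 ⟨by linarith [(hW_mem x y).1], (hW_mem x y).2⟩
    calc |W x y| * |D (u y - u x)| ≤ 1 * 1 :=
          mul_le_mul h1 (hD_bdd _) (abs_nonneg _) zero_le_one
      _ = 1 := one_mul 1
  -- integrability of the integrand
  have hInt : ∀ (u : C(Icc (0:ℝ) 1, ℝ)) (x : Icc (0:ℝ) 1),
      Integrable (fun y : Icc (0:ℝ) 1 => W x y * D (u y - u x)) := fun u x =>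
    (integrable_const (1:ℝ)).mono' (hcy u x).aestronglyMeasurable
      (Filter.Eventually.of_forall fun y => hbd u x y)
  -- continuity of the integral term in `x`
  have hcx : ∀ (u : C(Icc (0:ℝ) 1, ℝ)),
      Continuous fun x : Icc (0:ℝ) 1 => ∫ y : Icc (0:ℝ) 1, W x y * D (u y - u x) := by
    intro u
    apply continuous_of_dominated (bound := fun _ => (1:ℝ))
    · exact fun x => (hcy u x).aestronglyMeasurable
    · exact fun x => Filter.Eventually.of_forall fun y => hbd u x y
    · exact integrable_const 1
    · refine Filter.Eventually.of_forall fun y => ?_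
      exact (hW_cont.comp (continuous_id.prodMk continuous_const)).mul
        (hD_lip.continuous.comp (continuous_const.sub (map_continuous u)))
  -- the vector field
  obtain ⟨F, hFdef⟩ : ∃ F : ℝ → C(Icc (0:ℝ) 1, ℝ) → C(Icc (0:ℝ) 1, ℝ),
      ∀ t u x, F t u x = f (u x) t + ∫ y : Icc (0:ℝ) 1, W x y * D (u y - u x) := by
    refine ⟨fun t u => ⟨fun x => f (u x) t + ∫ y : Icc (0:ℝ) 1, W x y * D (u y - u x), ?_⟩,
      fun t u x => rfl⟩
    exact ((hf_lip t).continuous.comp (map_continuous u)).add (hcx u)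
  -- bound on the integral term
  have hIbd : ∀ (u : C(Icc (0:ℝ) 1, ℝ)) (x : Icc (0:ℝ) 1),
      ‖∫ y : Icc (0:ℝ) 1, W x y * D (u y - u x)‖ ≤ 1 := by
    intro u x
    calc ‖∫ y : Icc (0:ℝ) 1, W x y * D (u y - u x)‖
        ≤ 1 * (volume (univ : Set (Icc (0:ℝ) 1))).toReal :=
          norm_integral_le_of_norm_le_const (Filter.Eventually.of_forall fun y => hbd u x y)
      _ = 1 := by rw [hμ, mul_one]
  -- Lipschitz continuity of `F t`
  have hFlip : ∀ t, LipschitzWith K (F t) := by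
    intro t
    apply LipschitzWith.of_dist_le_mul
    intro u v
    rw [ContinuousMap.dist_le (by positivity)]
    intro x
    rw [Real.dist_eq, hFdef, hFdef]
    have h1 : |f (u x) t - f (v x) t| ≤ (Lf : ℝ) * dist u v := by
      have h' : dist (u x) (v x) ≤ dist u v := ContinuousMap.dist_apply_le_dist x
      calc |f (u x) t - f (v x) t| ≤ (Lf : ℝ) * dist (u x) (v x) := by
            rw [← Real.dist_eq]; exact (hf_lip t).dist_le_mul _ _
        _ ≤ (Lf : ℝ) * dist u v := mul_le_mul_of_nonneg_left h' Lf.coe_nonneg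
    have h2 : ‖(∫ y : Icc (0:ℝ) 1, W x y * D (u y - u x)) -
        ∫ y : Icc (0:ℝ) 1, W x y * D (v y - v x)‖ ≤ 2 * (LD : ℝ) * dist u v := by
      rw [← integral_sub (hInt u x) (hInt v x)]
      calc ‖∫ y : Icc (0:ℝ) 1, (W x y * D (u y - u x) - W x y * D (v y - v x))‖
          ≤ 2 * (LD : ℝ) * dist u v * (volume (univ : Set (Icc (0:ℝ) 1))).toReal := by
            apply norm_integral_le_of_norm_le_const
            refine Filter.Eventually.of_forall fun y => ?_
            rw [← mul_sub, Real.norm_eq_abs, abs_mul]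
            have h1 : |W x y| ≤ 1 := abs_le.2 ⟨by linarith [(hW_mem x y).1], (hW_mem x y).2⟩
            have h3 : |D (u y - u x) - D (v y - v x)| ≤ (LD : ℝ) * (2 * dist u v) := by
              have hl := hD_lip.dist_le_mul (u y - u x) (v y - v x)
              rw [Real.dist_eq, Real.dist_eq] at hl
              refine hl.trans (mul_le_mul_of_nonneg_left ?_ LD.coe_nonneg)
              have hy := ContinuousMap.dist_apply_le_dist (f := u) (g := v) y
              have hx := ContinuousMap.dist_apply_le_dist (f := u) (g := v) x
              rw [Real.dist_eq] at hy hx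
              calc |u y - u x - (v y - v x)| = |(u y - v y) - (u x - v x)| := by ring_nf
                _ ≤ |u y - v y| + |u x - v x| := abs_sub _ _
                _ ≤ dist u v + dist u v := add_le_add hy hx
                _ = 2 * dist u v := by ring
            calc |W x y| * |D (u y - u x) - D (v y - v x)|
                ≤ 1 * ((LD : ℝ) * (2 * dist u v)) :=
                  mul_le_mul h1 h3 (abs_nonneg _) zero_le_one
              _ = 2 * (LD : ℝ) * dist u v := by ring
        _ = 2 * (LD : ℝ) * dist u v := by rw [hμ, mul_one]
    calc |f (u x) t + (∫ y : Icc (0:ℝ) 1, W x y * D (u y - u x)) -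
          (f (v x) t + ∫ y : Icc (0:ℝ) 1, W x y * D (v y - v x))|
        ≤ |f (u x) t - f (v x) t| + ‖(∫ y : Icc (0:ℝ) 1, W x y * D (u y - u x)) -
            ∫ y : Icc (0:ℝ) 1, W x y * D (v y - v x)‖ := by
          rw [Real.norm_eq_abs]
          have : f (u x) t + (∫ y : Icc (0:ℝ) 1, W x y * D (u y - u x)) -
              (f (v x) t + ∫ y : Icc (0:ℝ) 1, W x y * D (v y - v x)) =
              (f (u x) t - f (v x) t) + ((∫ y : Icc (0:ℝ) 1, W x y * D (u y - u x)) -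
              ∫ y : Icc (0:ℝ) 1, W x y * D (v y - v x)) := by ring
          rw [this]
          exact abs_add_le _ _
      _ ≤ (Lf : ℝ) * dist u v + 2 * (LD : ℝ) * dist u v := add_le_add h1 h2
      _ = (K : ℝ) * dist u v := by rw [hK]; push_cast; ring
  -- joint continuity of `f`
  have hfc : Continuous fun q : ℝ × ℝ => f q.1 q.2 :=
    continuous_prod_of_continuous_lipschitzWith _ Lf (fun a => hf_cont a) fun b => hf_lip b
  -- continuity of `t ↦ F t u`
  have hFt : ∀ u : C(Icc (0:ℝ) 1, ℝ), Continuous fun t => F t u := by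
    intro u
    have hg : Continuous fun p : ℝ × Icc (0:ℝ) 1 =>
        f (u p.2) p.1 + ∫ y : Icc (0:ℝ) 1, W p.2 y * D (u y - u p.2) := by
      refine Continuous.add ?_ ((hcx u).comp continuous_snd)
      exact hfc.comp ((((map_continuous u).comp continuous_snd)).prodMk continuous_fst)
    set g : C(ℝ × Icc (0:ℝ) 1, ℝ) := ⟨_, hg⟩ with hgdef
    have : Continuous fun t => g.curry t := map_continuous g.curry
    refine this.congr fun t => ?_
    ext x
    rw [hFdef]
    rfl
  -- joint continuity of `F`
  have hFcont : Continuous fun p : ℝ × C(Icc (0:ℝ) 1, ℝ) => F p.1 p.2 := by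
    have h := continuous_prod_of_continuous_lipschitzWith
      (fun p : C(Icc (0:ℝ) 1, ℝ) × ℝ => F p.2 p.1) K
      (fun u => hFt u) (fun t => hFlip t)
    exact h.comp (continuous_snd.prodMk continuous_fst)
  -- solutions on [0, n+1]
  have hsol : ∀ n : ℕ, ∃ s : ℝ → C(Icc (0:ℝ) 1, ℝ), s 0 = θ₀ ∧
      ∀ t ∈ Icc (0:ℝ) (n+1), HasDerivWithinAt s (F t (s t)) (Icc 0 (n+1)) t := by
    intro n
    set T : ℝ := (n:ℝ) + 1 with hT
    have hT0 : (0:ℝ) ≤ T := by positivity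
    -- bound on |f 0 t| on [0,T]
    obtain ⟨M, hM⟩ : ∃ M : ℝ, ∀ t ∈ Icc (0:ℝ) T, |f 0 t| ≤ M := by
      obtain ⟨M, hM⟩ := (isCompact_Icc (a := (0:ℝ)) (b := T)).exists_bound_of_continuousOn
        ((hf_cont 0).continuousOn)
      exact ⟨M, fun t ht => by have := hM t ht; rwa [Real.norm_eq_abs] at this⟩
    have hM0 : 0 ≤ M := le_trans (abs_nonneg _) (hM 0 ⟨le_refl _, hT0⟩)
    set C : ℝ := M + (Lf : ℝ) * (2 * Real.pi) + 1 with hC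
    have hC0 : 0 ≤ C := by positivity
    have hfb : ∀ (z t : ℝ), t ∈ Icc (0:ℝ) T → |f z t| ≤ M + (Lf : ℝ) * (2 * Real.pi) := by
      intro z t ht
      have hper : Function.Periodic (fun w => f w t) (2 * Real.pi) := fun w => hf_per w t
      obtain ⟨y, hy, hz⟩ := hper.exists_mem_Ico₀ (by positivity) z
      have hlf := (hf_lip t).dist_le_mul y 0
      rw [Real.dist_eq, Real.dist_eq, sub_zero] at hlf
      have hyb : |y| ≤ 2 * Real.pi := by
        rw [abs_of_nonneg hy.1]; exact hy.2.le
      calc |f z t| = |f y t| := by rw [hz]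
        _ ≤ |f y t - f 0 t| + |f 0 t| := by
            have h := abs_add_le (f y t - f 0 t) (f 0 t)
            simpa using h
        _ ≤ (Lf : ℝ) * (2 * Real.pi) + M := by
            refine add_le_add (hlf.trans ?_) (hM t ht)
            exact mul_le_mul_of_nonneg_left hyb Lf.coe_nonneg
        _ = M + (Lf : ℝ) * (2 * Real.pi) := by ring
    have hFnorm : ∀ t ∈ Icc (0:ℝ) T, ∀ u, ‖F t u‖ ≤ C := by
      intro t ht u
      rw [ContinuousMap.norm_le _ hC0]
      intro x
      rw [hFdef, Real.norm_eq_abs]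
      calc |f (u x) t + ∫ y : Icc (0:ℝ) 1, W x y * D (u y - u x)|
          ≤ |f (u x) t| + ‖∫ y : Icc (0:ℝ) 1, W x y * D (u y - u x)‖ := abs_add_le _ _
        _ ≤ (M + (Lf : ℝ) * (2 * Real.pi)) + 1 :=
            add_le_add (hfb _ t ht) (hIbd u x)
        _ = C := by rw [hC]
    have hpl : IsPicardLindelof F (tmin := 0) (tmax := T) ⟨0, ⟨le_refl _, hT0⟩⟩ θ₀
        ⟨C * T, by positivity⟩ 0 ⟨C, hC0⟩ K := by
      refine ⟨?_, ?_, ?_, ?_⟩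
      · exact fun t _ => (hFlip t).lipschitzOnWith
      · exact fun x _ => (hFt x).continuousOn
      · exact fun t ht x _ => hFnorm t ht x
      · have : max (T - 0) (0 - 0) = T := by
          rw [sub_zero, sub_zero]; exact max_eq_left hT0
        show C * max (T - 0) (0 - 0) ≤ C * T - 0
        rw [this, sub_zero]
    obtain ⟨s, hs0, hsD⟩ := hpl.exists_eq_forall_mem_Icc_hasDerivWithinAt₀
    exact ⟨s, hs0, hsD⟩
  choose sol hsol0 hsolD using hsol
  -- upgrade derivative within Icc to within Ici t
  have hup : ∀ (n : ℕ) (g : ℝ → C(Icc (0:ℝ) 1, ℝ)),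
      (∀ t ∈ Icc (0:ℝ) (n+1), HasDerivWithinAt g (F t (g t)) (Icc 0 (n+1)) t) →
      ∀ t ∈ Ico (0:ℝ) (n+1), HasDerivWithinAt g (F t (g t)) (Ici t) t := by
    intro n g hg t ht
    refine (hg t ⟨ht.1, ht.2.le⟩).mono_of_mem_nhdsWithin ?_
    have h1 : Iic ((n:ℝ)+1) ∈ nhdsWithin t (Ici t) :=
      mem_nhdsWithin_of_mem_nhds (Iic_mem_nhds ht.2)
    refine Filter.mem_of_superset (Filter.inter_mem h1 self_mem_nhdsWithin) ?_
    rintro z ⟨hz1, hz2⟩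
    exact ⟨le_trans ht.1 hz2, hz1⟩
  -- uniqueness on [0, b]
  have huniq : ∀ (b : ℝ) (g₁ g₂ : ℝ → C(Icc (0:ℝ) 1, ℝ)),
      ContinuousOn g₁ (Icc 0 b) →
      (∀ t ∈ Ico (0:ℝ) b, HasDerivWithinAt g₁ (F t (g₁ t)) (Ici t) t) →
      ContinuousOn g₂ (Icc 0 b) →
      (∀ t ∈ Ico (0:ℝ) b, HasDerivWithinAt g₂ (F t (g₂ t)) (Ici t) t) →
      g₁ 0 = g₂ 0 → EqOn g₁ g₂ (Icc 0 b) := by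
    intro b g₁ g₂ hc1 hd1 hc2 hd2 h0
    exact ODE_solution_unique hFlip hc1 hd1 hc2 hd2 h0
  -- continuity of partial solutions
  have hsolc : ∀ (n : ℕ), ContinuousOn (sol n) (Icc (0:ℝ) (n+1)) :=
    fun n t ht => (hsolD n t ht).continuousWithinAt
  -- partial solutions agree
  have hagree : ∀ (m n : ℕ), ∀ t ∈ Icc (0:ℝ) ((min m n : ℕ) + 1), sol m t = sol n t := by
    intro m n t ht
    have hbm : ((min m n : ℕ) : ℝ) + 1 ≤ (m : ℝ) + 1 := by
      have : (min m n : ℕ) ≤ m := min_le_left _ _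
      exact_mod_cast add_le_add_left (Nat.cast_le.2 this) 1
    have hbn : ((min m n : ℕ) : ℝ) + 1 ≤ (n : ℝ) + 1 := by
      have : (min m n : ℕ) ≤ n := min_le_right _ _
      exact_mod_cast add_le_add_left (Nat.cast_le.2 this) 1
    refine huniq (((min m n : ℕ) : ℝ) + 1) (sol m) (sol n)
      ((hsolc m).mono (Icc_subset_Icc_right hbm))
      (fun s hs => hup m (sol m) (hsolD m) s ⟨hs.1, lt_of_lt_of_le hs.2 hbm⟩)
      ((hsolc n).mono (Icc_subset_Icc_right hbn))
      (fun s hs => hup n (sol n) (hsolD n) s ⟨hs.1, lt_of_lt_of_le hs.2 hbn⟩)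
      (by rw [hsol0 m, hsol0 n]) ht
  -- the global solution
  set θ : ℝ → C(Icc (0:ℝ) 1, ℝ) := fun t => sol ⌊t⌋₊ t with hθdef
  have hθeq : ∀ (n : ℕ), ∀ t ∈ Icc (0:ℝ) ((n:ℝ)+1), θ t = sol n t := by
    intro n t ht
    refine hagree ⌊t⌋₊ n t ⟨ht.1, ?_⟩
    have h1 : t < (⌊t⌋₊ : ℝ) + 1 := Nat.lt_floor_add_one t
    have h2 : t ≤ ((min ⌊t⌋₊ n : ℕ) : ℝ) + 1 := by
      rcases le_total (⌊t⌋₊ : ℕ) n with h | h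
      · rw [min_eq_left h]; exact h1.le
      · rw [min_eq_right h]; exact ht.2
    exact h2
  have hθ0 : θ 0 = θ₀ := by
    rw [hθdef]
    simp only [Nat.floor_zero]
    exact hsol0 0
  have hDeriv : ∀ t ∈ Ici (0:ℝ), HasDerivWithinAt θ (F t (θ t)) (Ici 0) t := by
    intro t ht
    set n : ℕ := ⌊t⌋₊ with hn
    have h1 : t < (n:ℝ) + 1 := Nat.lt_floor_add_one t
    have htmem : t ∈ Icc (0:ℝ) ((n:ℝ)+1) := ⟨ht, h1.le⟩
    have hd := hsolD n t htmem
    have hd2 : HasDerivWithinAt θ (F t (sol n t)) (Icc 0 ((n:ℝ)+1)) t :=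
      hd.congr (fun z hz => (hθeq n z hz)) (hθeq n t htmem)
    have hd3 : HasDerivWithinAt θ (F t (θ t)) (Icc 0 ((n:ℝ)+1)) t := by
      rwa [hθeq n t htmem]
    refine hd3.mono_of_mem_nhdsWithin ?_
    have hm : Iic ((n:ℝ)+1) ∈ nhdsWithin t (Ici 0) :=
      mem_nhdsWithin_of_mem_nhds (Iic_mem_nhds h1)
    refine Filter.mem_of_superset (Filter.inter_mem hm self_mem_nhdsWithin) ?_
    rintro z ⟨hz1, hz2⟩
    exact ⟨hz2, hz1⟩
  have hθcont : ContinuousOn θ (Ici 0) := fun t ht => (hDeriv t ht).continuousWithinAt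
  constructor
  · refine ⟨θ, hθ0, fun t => F t (θ t), ?_, hDeriv, ?_⟩
    · exact hFcont.comp_continuousOn (continuousOn_id.prodMk hθcont)
    · intro t _ x
      rw [hFdef]
  · rintro θ₁ θ₂ ⟨h10, v₁, hv₁c, hv₁d, hv₁e⟩ ⟨h20, v₂, hv₂c, hv₂d, hv₂e⟩ t ht
    have hv₁F : ∀ s ∈ Ici (0:ℝ), v₁ s = F s (θ₁ s) := by
      intro s hs
      ext x
      rw [hv₁e s hs x, hFdef]
    have hv₂F : ∀ s ∈ Ici (0:ℝ), v₂ s = F s (θ₂ s) := by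
      intro s hs
      ext x
      rw [hv₂e s hs x, hFdef]
    have hd1 : ∀ s ∈ Ico (0:ℝ) (t+1), HasDerivWithinAt θ₁ (F s (θ₁ s)) (Ici s) s := by
      intro s hs
      have := (hv₁d s hs.1).mono (Ici_subset_Ici.2 hs.1)
      rwa [hv₁F s hs.1] at this
    have hd2 : ∀ s ∈ Ico (0:ℝ) (t+1), HasDerivWithinAt θ₂ (F s (θ₂ s)) (Ici s) s := by
      intro s hs
      have := (hv₂d s hs.1).mono (Ici_subset_Ici.2 hs.1)
      rwa [hv₂F s hs.1] at this
    have hc1 : ContinuousOn θ₁ (Icc (0:ℝ) (t+1)) := fun s hs =>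
      ((hv₁d s hs.1).continuousWithinAt).mono fun z hz => hz.1
    have hc2 : ContinuousOn θ₂ (Icc (0:ℝ) (t+1)) := fun s hs =>
      ((hv₂d s hs.1).continuousWithinAt).mono fun z hz => hz.1
    have h0 : θ₁ 0 = θ₂ 0 := by rw [h10, h20]
    exact huniq (t+1) θ₁ θ₂ hc1 hd1 hc2 hd2 h0 ⟨ht, by linarith [mem_Ici.1 ht]⟩
end

section
/- Averaged-versus-continuum convergence: Let W : [0,1]² → [0,1] be continuously differentiable and symmetric, η ∈ C¹([0,1]), and let f and D satisfy the regularity assumptions (f Lipschitz with constant L_f and 2π-periodic in its first argument, continuous in its second; D Lipschitz with constant L_D, 2π-periodic, |D| ≤ 1). Let θ(t,x) be the solution of the continuum dynamical system, and let θ̄ⁿ(t,x) be the piecewise constant interpolant of the solution of the averaged dynamical system. Then for any fixed ε, T > 0, there exists n₂ ∈ ℕ such that for all n > n₂, max_{x∈[0,1]} |θ̄ⁿ(T,x) − θ(T,x)| < ε. -/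
open MeasureTheory Set Filter

/-- The cell average `W⁽ⁿ⁾ᵢⱼ = n² ∫_{Iᵢ⁽ⁿ⁾×Iⱼ⁽ⁿ⁾} W(x,y) dx dy`, where the cells are
indexed by `Fin n` (so the cell of index `i` is `[i/n, (i+1)/n)`). -/
noncomputable def cellAvg (W : ℝ → ℝ → ℝ) (n : ℕ) (i j : Fin n) : ℝ :=
  (n : ℝ) ^ 2 * ∫ x in ((i.val : ℝ) / n)..(((i.val : ℝ) + 1) / n),
    ∫ y in ((j.val : ℝ) / n)..(((j.val : ℝ) + 1) / n), W x y

/-- The piecewise constant interpolant `x ↦ Σᵢ vᵢ·𝟙_{[i/n,(i+1)/n)}(x)` of a vector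
`v : Fin n → ℝ`. -/
noncomputable def interp (n : ℕ) (v : Fin n → ℝ) (x : ℝ) : ℝ :=
  ∑ i : Fin n,
    v i * Set.indicator (Ico ((i.val : ℝ) / n) (((i.val : ℝ) + 1) / n)) (fun _ => 1) x

section Aux

lemma cell_subset {n : ℕ} (hn : 0 < n) (j : Fin n) :
    Icc ((j.val : ℝ) / n) (((j.val : ℝ) + 1) / n) ⊆ Icc (0:ℝ) 1 := by
  have hnR : (0:ℝ) < n := by exact_mod_cast hn
  apply Icc_subset_Icc
  · positivity
  · rw [div_le_one hnR]
    exact_mod_cast j.isLt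

lemma cell_len {n : ℕ} (_hn : 0 < n) (j : Fin n) :
    ((j.val : ℝ) + 1) / n - (j.val : ℝ) / n = 1 / n := by
  rw [div_sub_div_same]; norm_num

lemma cell_le {n : ℕ} (hn : 0 < n) (j : Fin n) :
    (j.val : ℝ) / n ≤ ((j.val : ℝ) + 1) / n := by
  have hnR : (0:ℝ) < n := by exact_mod_cast hn
  have h1n : (0:ℝ) < 1 / n := by positivity
  have := cell_len hn j
  linarith

lemma interp_pick (n : ℕ) (hn : 0 < n) (v : Fin n → ℝ) (x : ℝ) (hx : x ∈ Ico (0:ℝ) 1) :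
    ∃ i : Fin n, interp n v x = v i ∧ (i.val : ℝ) / n ≤ x ∧ x < ((i.val : ℝ) + 1) / n := by
  have hnR : (0:ℝ) < n := by exact_mod_cast hn
  have hx0 : (0:ℝ) ≤ (n:ℝ) * x := mul_nonneg hnR.le hx.1
  have hmn : ⌊(n:ℝ) * x⌋₊ < n := by
    rw [Nat.floor_lt hx0]
    nlinarith [hx.2]
  refine ⟨⟨⌊(n:ℝ) * x⌋₊, hmn⟩, ?_, ?_, ?_⟩
  · unfold interp
    rw [Finset.sum_eq_single (⟨⌊(n:ℝ) * x⌋₊, hmn⟩ : Fin n)]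
    · rw [Set.indicator_of_mem, mul_one]
      constructor
      · rw [div_le_iff₀ hnR]
        calc ((⌊(n:ℝ) * x⌋₊ : ℝ)) ≤ (n:ℝ) * x := Nat.floor_le hx0
        _ = x * n := mul_comm _ _
      · rw [lt_div_iff₀ hnR]
        calc x * n = (n:ℝ) * x := mul_comm _ _
        _ < ⌊(n:ℝ) * x⌋₊ + 1 := Nat.lt_floor_add_one _
    · intro j _ hj
      rw [Set.indicator_of_notMem, mul_zero]
      intro hmem
      apply hj
      have h1 : ((j.val : ℝ)) ≤ (n:ℝ) * x := by
        have := hmem.1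
        rw [div_le_iff₀ hnR] at this
        linarith [mul_comm x (n:ℝ)]
      have h2 : (n:ℝ) * x < (j.val : ℝ) + 1 := by
        have := hmem.2
        rw [lt_div_iff₀ hnR] at this
        linarith [mul_comm x (n:ℝ)]
      have hfl : ⌊(n:ℝ) * x⌋₊ = j.val := by
        rw [Nat.floor_eq_iff hx0]
        constructor
        · exact_mod_cast h1
        · exact_mod_cast h2
      exact Fin.ext hfl.symm
    · intro h
      exact absurd (Finset.mem_univ _) h
  · rw [div_le_iff₀ hnR]
    calc ((⌊(n:ℝ) * x⌋₊ : ℝ)) ≤ (n:ℝ) * x := Nat.floor_le hx0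
    _ = x * n := mul_comm _ _
  · rw [lt_div_iff₀ hnR]
    calc x * n = (n:ℝ) * x := mul_comm _ _
    _ < ⌊(n:ℝ) * x⌋₊ + 1 := Nat.lt_floor_add_one _

lemma cellAvg_sub_le {W : ℝ → ℝ → ℝ} {KW : NNReal}
    (hW : LipschitzOnWith KW (Function.uncurry W) (Icc 0 1 ×ˢ Icc 0 1))
    {n : ℕ} (hn : 0 < n) (i j : Fin n) {y : ℝ}
    (hy : y ∈ Icc ((j.val : ℝ) / n) (((j.val : ℝ) + 1) / n)) :
    |cellAvg W n i j - W ((i.val : ℝ) / n) y| ≤ KW / n := by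
  have hnR : (0:ℝ) < n := by exact_mod_cast hn
  have hn0 : (n:ℝ) ≠ 0 := hnR.ne'
  set xi := (i.val : ℝ) / n with hxi
  set xi1 := ((i.val : ℝ) + 1) / n with hxi1
  set xj := (j.val : ℝ) / n with hxj
  set xj1 := ((j.val : ℝ) + 1) / n with hxj1
  have hleni : xi1 - xi = 1 / n := cell_len hn i
  have hlenj : xj1 - xj = 1 / n := cell_len hn j
  have h1n : (0:ℝ) < 1 / n := by positivity
  have hile : xi ≤ xi1 := by linarith
  have hjle : xj ≤ xj1 := by linarith
  have hisub : Icc xi xi1 ⊆ Icc (0:ℝ) 1 := cell_subset hn i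
  have hjsub : Icc xj xj1 ⊆ Icc (0:ℝ) 1 := cell_subset hn j
  have hy01 : y ∈ Icc (0:ℝ) 1 := hjsub hy
  have hxi01 : xi ∈ Icc (0:ℝ) 1 := hisub ⟨le_rfl, hile⟩
  set c := W xi y with hc
  have hpt : ∀ a ∈ Icc xi xi1, ∀ b ∈ Icc xj xj1, |W a b - c| ≤ (KW : ℝ) * (1 / n) := by
    intro a ha b hb
    have hd := hW.dist_le_mul (a, b) (Set.mk_mem_prod (hisub ha) (hjsub hb))
      (xi, y) (Set.mk_mem_prod hxi01 hy01)
    simp only [Function.uncurry, Prod.dist_eq, Real.dist_eq] at hd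
    have hdist : max |a - xi| |b - y| ≤ 1 / n := by
      apply max_le
      · rw [abs_le]; constructor <;> [linarith [ha.1, ha.2]; linarith [ha.1, ha.2]]
      · rw [abs_le]
        constructor <;> [linarith [hb.1, hb.2, hy.1, hy.2]; linarith [hb.1, hb.2, hy.1, hy.2]]
    calc |W a b - c| ≤ (KW : ℝ) * max |a - xi| |b - y| := hd
    _ ≤ (KW : ℝ) * (1 / n) := mul_le_mul_of_nonneg_left hdist KW.coe_nonneg
  have hWc : ContinuousOn (Function.uncurry W) (Icc 0 1 ×ˢ Icc 0 1) := hW.continuousOn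
  have hslice : ∀ a ∈ Icc (0:ℝ) 1, ContinuousOn (fun b => W a b) (Icc (0:ℝ) 1) := by
    intro a ha
    have : ContinuousOn (fun b => Function.uncurry W (a, b)) (Icc (0:ℝ) 1) := by
      apply hWc.comp (Continuous.continuousOn (continuous_const.prodMk continuous_id))
      intro b hb
      exact Set.mk_mem_prod ha hb
    exact this
  have hint : ∀ a ∈ Icc (0:ℝ) 1, IntervalIntegrable (fun b => W a b) volume xj xj1 :=
    fun a ha => ((hslice a ha).mono (by rw [uIcc_of_le hjle]; exact hjsub)).intervalIntegrable
  set g := fun a => ∫ b in xj..xj1, W a b with hg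
  have hglip : ∀ a ∈ Icc (0:ℝ) 1, ∀ a' ∈ Icc (0:ℝ) 1, |g a - g a'| ≤ (KW : ℝ) * |a - a'| := by
    intro a ha a' ha'
    have hsub : g a - g a' = ∫ b in xj..xj1, (W a b - W a' b) :=
      (intervalIntegral.integral_sub (hint a ha) (hint a' ha')).symm
    rw [hsub]
    have hbd : ∀ b ∈ Set.uIoc xj xj1, ‖W a b - W a' b‖ ≤ (KW : ℝ) * |a - a'| := by
      intro b hb
      have hb' : b ∈ Icc (0:ℝ) 1 :=
        hjsub (by rw [Set.uIoc_of_le hjle] at hb; exact Ioc_subset_Icc_self hb)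
      have hd := hW.dist_le_mul (a, b) (Set.mk_mem_prod ha hb') (a', b) (Set.mk_mem_prod ha' hb')
      simp only [Function.uncurry, Prod.dist_eq, Real.dist_eq, sub_self, abs_zero] at hd
      simpa [Real.norm_eq_abs, max_eq_left (abs_nonneg (a - a'))] using hd
    calc ‖∫ b in xj..xj1, (W a b - W a' b)‖ ≤ ((KW : ℝ) * |a - a'|) * |xj1 - xj| :=
          intervalIntegral.norm_integral_le_of_norm_le_const hbd
    _ ≤ ((KW : ℝ) * |a - a'|) * 1 := by
        apply mul_le_mul_of_nonneg_left _ (by positivity)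
        rw [hlenj, abs_of_nonneg (by positivity : (0:ℝ) ≤ 1/(n:ℝ))]
        rw [div_le_one hnR]
        exact_mod_cast hn
    _ = (KW : ℝ) * |a - a'| := mul_one _
  have hgcont : ContinuousOn g (Icc (0:ℝ) 1) := by
    have : LipschitzOnWith KW g (Icc (0:ℝ) 1) := by
      apply LipschitzOnWith.of_dist_le_mul
      intro a ha a' ha'
      rw [Real.dist_eq, Real.dist_eq]
      exact hglip a ha a' ha'
    exact this.continuousOn
  have hgint : IntervalIntegrable g volume xi xi1 :=
    (hgcont.mono (by rw [uIcc_of_le hile]; exact hisub)).intervalIntegrable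
  have hinner : ∀ a ∈ Set.uIoc xi xi1, ‖g a - c / n‖ ≤ (KW : ℝ) * (1 / n) * (1 / n) := by
    intro a ha
    have ha' : a ∈ Icc xi xi1 := by rw [Set.uIoc_of_le hile] at ha; exact Ioc_subset_Icc_self ha
    have hcint : (∫ _b in xj..xj1, c) = c / n := by
      rw [intervalIntegral.integral_const, hlenj, smul_eq_mul]; ring
    have hsub : g a - c / n = ∫ b in xj..xj1, (W a b - c) := by
      rw [← hcint]
      exact (intervalIntegral.integral_sub (hint a (hisub ha')) intervalIntegrable_const).symm
    rw [hsub]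
    calc ‖∫ b in xj..xj1, (W a b - c)‖ ≤ ((KW : ℝ) * (1 / n)) * |xj1 - xj| := by
          apply intervalIntegral.norm_integral_le_of_norm_le_const
          intro b hb
          have hb' : b ∈ Icc xj xj1 := by rw [Set.uIoc_of_le hjle] at hb; exact Ioc_subset_Icc_self hb
          simpa [Real.norm_eq_abs] using hpt a ha' b hb'
    _ = (KW : ℝ) * (1 / n) * (1 / n) := by
        rw [hlenj, abs_of_nonneg (by positivity : (0:ℝ) ≤ 1/(n:ℝ))]
  have houter : ‖(∫ a in xi..xi1, g a) - c / n / n‖ ≤ (KW : ℝ) * (1 / n) * (1 / n) * (1 / n) := by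
    have hcint : (∫ _a in xi..xi1, (c / n : ℝ)) = c / n / n := by
      rw [intervalIntegral.integral_const, hleni, smul_eq_mul]; ring
    have hsub : (∫ a in xi..xi1, g a) - c / n / n = ∫ a in xi..xi1, (g a - c / n) := by
      rw [← hcint]
      exact (intervalIntegral.integral_sub hgint intervalIntegrable_const).symm
    rw [hsub]
    calc ‖∫ a in xi..xi1, (g a - c / n)‖ ≤ ((KW : ℝ) * (1 / n) * (1 / n)) * |xi1 - xi| :=
          intervalIntegral.norm_integral_le_of_norm_le_const hinner
    _ = (KW : ℝ) * (1 / n) * (1 / n) * (1 / n) := by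
        rw [hleni, abs_of_nonneg (by positivity : (0:ℝ) ≤ 1/(n:ℝ))]
  have hrepr : cellAvg W n i j - c = (n:ℝ)^2 * ((∫ a in xi..xi1, g a) - c / n / n) := by
    unfold cellAvg
    rw [mul_sub]
    congr 1
    field_simp
  rw [hrepr, abs_mul, abs_of_nonneg (by positivity : (0:ℝ) ≤ (n:ℝ)^2)]
  calc (n:ℝ)^2 * |(∫ a in xi..xi1, g a) - c / n / n|
      ≤ (n:ℝ)^2 * ((KW : ℝ) * (1 / n) * (1 / n) * (1 / n)) := by
        apply mul_le_mul_of_nonneg_left _ (by positivity)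
        simpa [Real.norm_eq_abs] using houter
  _ = (KW : ℝ) / n := by field_simp

lemma gronwallBound_mul (ρ K T : ℝ) : gronwallBound ρ K ρ T = ρ * gronwallBound 1 K 1 T := by
  unfold gronwallBound
  split_ifs <;> ring

lemma gronwallBound_one_pos {K T : ℝ} (hK : 0 ≤ K) (hT : 0 ≤ T) :
    0 < gronwallBound 1 K 1 T := by
  unfold gronwallBound
  split_ifs with h
  · linarith
  · have hKpos : 0 < K := lt_of_le_of_ne hK (Ne.symm h)
    have he : 1 ≤ Real.exp (K * T) := Real.one_le_exp (by positivity)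
    have h2 : 0 ≤ 1 / K * (Real.exp (K * T) - 1) := mul_nonneg (by positivity) (by linarith)
    nlinarith [Real.exp_pos (K * T)]

end Aux

set_option maxHeartbeats 1000000 in
/-- Averaged-versus-continuum convergence: for any `ε, T > 0`, for all large `n` the
piecewise constant interpolant of the solution of the averaged dynamical system is
uniformly `ε`-close at time `T` to the solution of the continuum dynamical system. -/
theorem statement6 (Lf LD : NNReal) (f : ℝ → ℝ → ℝ) (D : ℝ → ℝ) (W : ℝ → ℝ → ℝ)
    (η : ℝ → ℝ)
    (hf_lip : ∀ t, LipschitzWith Lf fun u => f u t)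
    (hf_per : ∀ u t, f (u + 2 * Real.pi) t = f u t)
    (hf_cont : ∀ u, Continuous fun t => f u t)
    (hD_lip : LipschitzWith LD D)
    (hD_per : ∀ u, D (u + 2 * Real.pi) = D u)
    (hD_bdd : ∀ u, |D u| ≤ 1)
    (hW_C1 : ContDiffOn ℝ 1 (Function.uncurry W) (Icc 0 1 ×ˢ Icc 0 1))
    (hW_mem : ∀ x ∈ Icc (0:ℝ) 1, ∀ y ∈ Icc (0:ℝ) 1, W x y ∈ Icc (0:ℝ) 1)
    (hW_sym : ∀ x ∈ Icc (0:ℝ) 1, ∀ y ∈ Icc (0:ℝ) 1, W x y = W y x)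
    (hη : ContDiffOn ℝ 1 η (Icc 0 1))
    -- `θ` is the solution of the continuum dynamical system (CDS):
    (θ : ℝ → ℝ → ℝ)
    (hθ0 : ∀ x ∈ Icc (0:ℝ) 1, θ 0 x = η x)
    (hθcont : ContinuousOn (fun p : ℝ × ℝ => θ p.1 p.2) (Ici 0 ×ˢ Icc 0 1))
    (hθode : ∀ t ∈ Ici (0:ℝ), ∀ x ∈ Icc (0:ℝ) 1,
      HasDerivWithinAt (fun s => θ s x)
        (f (θ t x) t + ∫ y in (0:ℝ)..1, W x y * D (θ t y - θ t x)) (Ici 0) t)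
    -- the solution of the averaged dynamical system (ADS):
    (Θbar : (n : ℕ) → ℝ → Fin n → ℝ)
    (hΘbar0 : ∀ n (i : Fin n), Θbar n 0 i = η ((i.val : ℝ) / n))
    (hΘbarode : ∀ n, 0 < n → ∀ i : Fin n, ∀ t ∈ Ici (0:ℝ),
      HasDerivWithinAt (fun s => Θbar n s i)
        (f (Θbar n t i) t +
          (n : ℝ)⁻¹ * ∑ j, cellAvg W n i j * D (Θbar n t j - Θbar n t i))
        (Ici 0) t)
    (ε T : ℝ) (hε : 0 < ε) (hT : 0 < T) :
    ∃ N : ℕ, ∀ n > N, ∀ x ∈ Ico (0:ℝ) 1,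
      |interp n (Θbar n T) x - θ T x| < ε := by
  classical
  -- a Lipschitz constant for W on the unit square
  have hsq : IsCompact (Icc (0:ℝ) 1 ×ˢ Icc (0:ℝ) 1) := isCompact_Icc.prod isCompact_Icc
  have hconv : Convex ℝ (Icc (0:ℝ) 1 ×ˢ Icc (0:ℝ) 1) := (convex_Icc _ _).prod (convex_Icc _ _)
  obtain ⟨KW, hKW⟩ : ∃ K : NNReal,
      LipschitzOnWith K (Function.uncurry W) (Icc (0:ℝ) 1 ×ˢ Icc (0:ℝ) 1) := by
    have hud : UniqueDiffOn ℝ (Icc (0:ℝ) 1 ×ˢ Icc (0:ℝ) 1) :=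
      (uniqueDiffOn_Icc one_pos).prod (uniqueDiffOn_Icc one_pos)
    have hdiff : DifferentiableOn ℝ (Function.uncurry W) (Icc (0:ℝ) 1 ×ˢ Icc (0:ℝ) 1) :=
      hW_C1.differentiableOn one_ne_zero
    have hcont := hW_C1.continuousOn_fderivWithin hud le_rfl
    obtain ⟨C, hC⟩ := hsq.exists_bound_of_continuousOn hcont
    refine ⟨⟨max C 0, le_max_right _ _⟩,
      Convex.lipschitzOnWith_of_nnnorm_fderivWithin_le hdiff (fun x hx => ?_) hconv⟩
    refine NNReal.coe_le_coe.1 (?_ : ‖fderivWithin ℝ (Function.uncurry W) (Icc (0:ℝ) 1 ×ˢ Icc (0:ℝ) 1) x‖ ≤ max C 0)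
    exact (hC x hx).trans (le_max_left _ _)
  set K : ℝ := (Lf : ℝ) + 2 * (LD : ℝ) with hKdef
  have hK0 : 0 ≤ K := by positivity
  have hC₀ : 0 < gronwallBound 1 K 1 T := gronwallBound_one_pos hK0 hT.le
  set C₀ : ℝ := gronwallBound 1 K 1 T with hC₀def
  set ρ : ℝ := ε / (2 * C₀) with hρdef
  have hρ : 0 < ρ := div_pos hε (by linarith)
  set ε₁ : ℝ := min (ρ / (2 * ((LD:ℝ) + 1))) (ε / 2) with hε₁def
  have hε₁ : 0 < ε₁ := lt_min (by positivity) (by positivity)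
  -- uniform continuity of θ on [0,T] × [0,1]
  have hθT : ContinuousOn (fun p : ℝ × ℝ => θ p.1 p.2) (Icc 0 T ×ˢ Icc 0 1) :=
    hθcont.mono (Set.prod_mono Icc_subset_Ici_self subset_rfl)
  have hucθ := (isCompact_Icc.prod isCompact_Icc).uniformContinuousOn_of_continuous hθT
  rw [Metric.uniformContinuousOn_iff] at hucθ
  obtain ⟨δω, hδω, hω⟩ := hucθ ε₁ hε₁
  obtain ⟨N, hNgt⟩ := exists_nat_gt (max (1 / δω) (2 * (KW:ℝ) / ρ))
  refine ⟨N, fun n hn x hx => ?_⟩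
  have hn0 : 0 < n := Nat.lt_of_le_of_lt (Nat.zero_le N) hn
  have hnR : (0:ℝ) < n := by exact_mod_cast hn0
  have hNn : (N:ℝ) < n := by exact_mod_cast hn
  have hδn : 1 / (n:ℝ) < δω := by
    have h1 : 1 / δω < (n:ℝ) := lt_of_le_of_lt (le_max_left _ _) (lt_trans hNgt hNn)
    rw [div_lt_iff₀ hδω] at h1
    rw [div_lt_iff₀ hnR]
    nlinarith
  have hKWn : (KW:ℝ) / n < ρ / 2 := by
    have h1 : 2 * (KW:ℝ) / ρ < (n:ℝ) := lt_of_le_of_lt (le_max_right _ _) (lt_trans hNgt hNn)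
    rw [div_lt_iff₀ hρ] at h1
    rw [div_lt_div_iff₀ hnR two_pos]
    nlinarith
  have hξmem : ∀ i : Fin n, (i.val : ℝ) / n ∈ Icc (0:ℝ) 1 :=
    fun i => cell_subset hn0 i ⟨le_rfl, cell_le hn0 i⟩
  -- the comparison vector
  set U : ℝ → Fin n → ℝ := fun t i => Θbar n t i - θ t ((i.val : ℝ) / n) with hU
  set U' : ℝ → Fin n → ℝ := fun t i =>
    (f (Θbar n t i) t + (n:ℝ)⁻¹ * ∑ j, cellAvg W n i j * D (Θbar n t j - Θbar n t i))
    - (f (θ t ((i.val : ℝ) / n)) t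
        + ∫ y in (0:ℝ)..1, W ((i.val : ℝ) / n) y * D (θ t y - θ t ((i.val : ℝ) / n))) with hU'
  have hUderiv : ∀ t ∈ Ico (0:ℝ) T, HasDerivWithinAt U (U' t) (Ici t) t := by
    intro t ht
    apply hasDerivWithinAt_pi.2
    intro i
    exact ((hΘbarode n hn0 i t ht.1).sub
      (hθode t ht.1 ((i.val : ℝ) / n) (hξmem i))).mono (Ici_subset_Ici.2 ht.1)
  have hUcont : ContinuousOn U (Icc 0 T) := by
    apply continuousOn_pi.2
    intro i
    have h1 : ContinuousOn (fun t => Θbar n t i) (Icc 0 T) := fun t ht =>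
      ((hΘbarode n hn0 i t ht.1).continuousWithinAt).mono Icc_subset_Ici_self
    have h2 : ContinuousOn (fun t => θ t ((i.val : ℝ) / n)) (Icc 0 T) := by
      have : ContinuousOn ((fun p : ℝ × ℝ => θ p.1 p.2) ∘ (fun t => (t, (i.val : ℝ) / n)))
          (Icc 0 T) :=
        hθcont.comp (Continuous.continuousOn (continuous_id.prodMk continuous_const))
          (fun t ht => Set.mk_mem_prod ht.1 (hξmem i))
      exact this
    exact h1.sub h2
  have hU0 : ‖U 0‖ ≤ ρ := by
    have hz : U 0 = 0 := by
      funext i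
      simp only [hU]
      rw [hΘbar0 n i, hθ0 ((i.val : ℝ) / n) (hξmem i), sub_self]
      rfl
    rw [hz, norm_zero]
    exact hρ.le
  -- continuity of the CDS integrand
  have hφcont : ∀ t : ℝ, 0 ≤ t → ∀ z ∈ Icc (0:ℝ) 1,
      ContinuousOn (fun y => W z y * D (θ t y - θ t z)) (Icc (0:ℝ) 1) := by
    intro t ht z hz
    have hWy : ContinuousOn (fun y => W z y) (Icc (0:ℝ) 1) := by
      have : ContinuousOn ((Function.uncurry W) ∘ (fun y => (z, y))) (Icc (0:ℝ) 1) :=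
        hKW.continuousOn.comp (Continuous.continuousOn (continuous_const.prodMk continuous_id))
          (fun y hy => Set.mk_mem_prod hz hy)
      exact this
    have hθy : ContinuousOn (fun y => θ t y) (Icc (0:ℝ) 1) := by
      have : ContinuousOn ((fun p : ℝ × ℝ => θ p.1 p.2) ∘ (fun y => (t, y))) (Icc (0:ℝ) 1) :=
        hθcont.comp (Continuous.continuousOn (continuous_const.prodMk continuous_id))
          (fun y hy => Set.mk_mem_prod ht hy)
      exact this
    exact hWy.mul (hD_lip.continuous.comp_continuousOn (hθy.sub continuousOn_const))
  -- the key derivative bound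
  have hbound : ∀ t ∈ Ico (0:ℝ) T, ‖U' t‖ ≤ K * ‖U t‖ + ρ := by
    intro t ht
    have hrhs0 : 0 ≤ K * ‖U t‖ + ρ := add_nonneg (mul_nonneg hK0 (norm_nonneg _)) hρ.le
    rw [pi_norm_le_iff_of_nonneg hrhs0]
    intro i
    have hUle : ∀ j : Fin n, |U t j| ≤ ‖U t‖ := fun j => by
      simpa [Real.norm_eq_abs] using norm_le_pi_norm (U t) j
    have hθcell : ∀ j : Fin n, ∀ y ∈ Icc ((j.val : ℝ) / n) (((j.val : ℝ) + 1) / n),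
        |θ t ((j.val : ℝ) / n) - θ t y| ≤ ε₁ := by
      intro j y hy
      have hy1 : y ∈ Icc (0:ℝ) 1 := cell_subset hn0 j hy
      have htT : t ∈ Icc (0:ℝ) T := ⟨ht.1, ht.2.le⟩
      have hdist : dist ((t, (j.val : ℝ) / n) : ℝ × ℝ) (t, y) < δω := by
        rw [Prod.dist_eq]
        simp only [dist_self, Real.dist_eq]
        have hlen := cell_len hn0 j
        have habs : |(j.val : ℝ) / n - y| ≤ 1 / n := by
          rw [abs_le]
          constructor <;> [linarith [hy.1, hy.2]; linarith [hy.1, hy.2]]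
        calc max 0 |(j.val : ℝ) / n - y| = |(j.val : ℝ) / n - y| := max_eq_right (abs_nonneg _)
        _ ≤ 1 / n := habs
        _ < δω := hδn
      have h2 := (hω (t, (j.val : ℝ) / n) (Set.mk_mem_prod htT (hξmem j))
        (t, y) (Set.mk_mem_prod htT hy1) hdist).le
      simpa [Real.dist_eq] using h2
    have hφc := hφcont t ht.1 ((i.val : ℝ) / n) (hξmem i)
    have hφint : ∀ j : Fin n, IntervalIntegrable
        (fun y => W ((i.val : ℝ) / n) y * D (θ t y - θ t ((i.val : ℝ) / n))) volume
        ((j.val : ℝ) / n) (((j.val : ℝ) + 1) / n) := by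
      intro j
      apply (hφc.mono _).intervalIntegrable
      rw [uIcc_of_le (cell_le hn0 j)]
      exact cell_subset hn0 j
    have hsplit : (∫ y in (0:ℝ)..1, W ((i.val : ℝ) / n) y * D (θ t y - θ t ((i.val : ℝ) / n)))
        = ∑ j : Fin n, ∫ y in ((j.val : ℝ) / n)..(((j.val : ℝ) + 1) / n),
            W ((i.val : ℝ) / n) y * D (θ t y - θ t ((i.val : ℝ) / n)) := by
      have key := intervalIntegral.sum_integral_adjacent_intervals
        (a := fun k : ℕ => (k:ℝ)/n) (μ := volume)
        (f := fun y => W ((i.val : ℝ) / n) y * D (θ t y - θ t ((i.val : ℝ) / n)))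
        (n := n) (fun k hk => by simpa using hφint ⟨k, hk⟩)
      simp only [Nat.cast_zero, zero_div, div_self hnR.ne'] at key
      rw [← key, Fin.sum_univ_eq_sum_range
        (fun k => ∫ y in ((k:ℝ)/n)..(((k:ℝ)+1)/n),
          W ((i.val : ℝ) / n) y * D (θ t y - θ t ((i.val : ℝ) / n)))]
      apply Finset.sum_congr rfl
      intro k _
      norm_num
    have hSrw : (n:ℝ)⁻¹ * ∑ j, cellAvg W n i j * D (Θbar n t j - Θbar n t i)
        = ∑ j : Fin n, ∫ _y in ((j.val : ℝ) / n)..(((j.val : ℝ) + 1) / n),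
            cellAvg W n i j * D (Θbar n t j - Θbar n t i) := by
      rw [Finset.mul_sum]
      apply Finset.sum_congr rfl
      intro j _
      rw [intervalIntegral.integral_const, smul_eq_mul, cell_len hn0 j]
      ring
    -- pointwise bound on each cell
    have hcellbd : ∀ j : Fin n, ∀ y ∈ Set.uIoc ((j.val : ℝ) / n) (((j.val : ℝ) + 1) / n),
        ‖cellAvg W n i j * D (Θbar n t j - Θbar n t i)
          - W ((i.val : ℝ) / n) y * D (θ t y - θ t ((i.val : ℝ) / n))‖
        ≤ (KW:ℝ)/n + (LD:ℝ) * (2 * ‖U t‖ + ε₁) := by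
      intro j y hy
      have hyIcc : y ∈ Icc ((j.val : ℝ) / n) (((j.val : ℝ) + 1) / n) := by
        rw [Set.uIoc_of_le (cell_le hn0 j)] at hy
        exact Ioc_subset_Icc_self hy
      have hy01 : y ∈ Icc (0:ℝ) 1 := cell_subset hn0 j hyIcc
      have hA : |cellAvg W n i j - W ((i.val : ℝ) / n) y| ≤ (KW:ℝ)/n :=
        cellAvg_sub_le hKW hn0 i j hyIcc
      have hB : |W ((i.val : ℝ) / n) y| ≤ 1 := by
        have hm := hW_mem ((i.val : ℝ) / n) (hξmem i) y hy01
        rw [abs_le]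
        exact ⟨by linarith [hm.1], hm.2⟩
      have hc1 : |D (Θbar n t j - Θbar n t i)| ≤ 1 := hD_bdd _
      have hcd : |D (Θbar n t j - Θbar n t i) - D (θ t y - θ t ((i.val : ℝ) / n))|
          ≤ (LD:ℝ) * (2 * ‖U t‖ + ε₁) := by
        have hl := hD_lip.dist_le_mul (Θbar n t j - Θbar n t i) (θ t y - θ t ((i.val : ℝ) / n))
        rw [Real.dist_eq, Real.dist_eq] at hl
        have h11 : |Θbar n t j - θ t ((j.val : ℝ) / n)| ≤ ‖U t‖ := hUle j
        have h12 : |θ t ((j.val : ℝ) / n) - θ t y| ≤ ε₁ := hθcell j y hyIcc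
        have h1 : |Θbar n t j - θ t y| ≤ ‖U t‖ + ε₁ := by
          have hrw : Θbar n t j - θ t y
              = (Θbar n t j - θ t ((j.val : ℝ) / n)) + (θ t ((j.val : ℝ) / n) - θ t y) := by ring
          rw [hrw]
          exact (abs_add_le _ _).trans (add_le_add h11 h12)
        have h2 : |Θbar n t i - θ t ((i.val : ℝ) / n)| ≤ ‖U t‖ := hUle i
        have h3 : |(Θbar n t j - Θbar n t i) - (θ t y - θ t ((i.val : ℝ) / n))|
            ≤ (‖U t‖ + ε₁) + ‖U t‖ := by
          have hrw : (Θbar n t j - Θbar n t i) - (θ t y - θ t ((i.val : ℝ) / n))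
              = (Θbar n t j - θ t y) - (Θbar n t i - θ t ((i.val : ℝ) / n)) := by ring
          rw [hrw]
          exact (abs_sub _ _).trans (add_le_add h1 h2)
        calc |D (Θbar n t j - Θbar n t i) - D (θ t y - θ t ((i.val : ℝ) / n))|
            ≤ (LD:ℝ) * |(Θbar n t j - Θbar n t i) - (θ t y - θ t ((i.val : ℝ) / n))| := hl
        _ ≤ (LD:ℝ) * ((‖U t‖ + ε₁) + ‖U t‖) := mul_le_mul_of_nonneg_left h3 LD.coe_nonneg
        _ = (LD:ℝ) * (2 * ‖U t‖ + ε₁) := by ring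
      rw [Real.norm_eq_abs]
      have habs : |cellAvg W n i j * D (Θbar n t j - Θbar n t i)
            - W ((i.val : ℝ) / n) y * D (θ t y - θ t ((i.val : ℝ) / n))|
          ≤ |cellAvg W n i j - W ((i.val : ℝ) / n) y| * |D (Θbar n t j - Θbar n t i)|
            + |W ((i.val : ℝ) / n) y|
              * |D (Θbar n t j - Θbar n t i) - D (θ t y - θ t ((i.val : ℝ) / n))| := by
        have hrw : cellAvg W n i j * D (Θbar n t j - Θbar n t i)
            - W ((i.val : ℝ) / n) y * D (θ t y - θ t ((i.val : ℝ) / n))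
            = (cellAvg W n i j - W ((i.val : ℝ) / n) y) * D (Θbar n t j - Θbar n t i)
              + W ((i.val : ℝ) / n) y
                * (D (Θbar n t j - Θbar n t i) - D (θ t y - θ t ((i.val : ℝ) / n))) := by ring
        rw [hrw]
        refine (abs_add_le _ _).trans ?_
        rw [abs_mul, abs_mul]
      have hm1 : |cellAvg W n i j - W ((i.val : ℝ) / n) y| * |D (Θbar n t j - Θbar n t i)|
          ≤ (KW:ℝ)/n := by
        calc |cellAvg W n i j - W ((i.val : ℝ) / n) y| * |D (Θbar n t j - Θbar n t i)|
            ≤ ((KW:ℝ)/n) * 1 := mul_le_mul hA hc1 (abs_nonneg _) (by positivity)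
        _ = (KW:ℝ)/n := mul_one _
      have hm2 : |W ((i.val : ℝ) / n) y|
            * |D (Θbar n t j - Θbar n t i) - D (θ t y - θ t ((i.val : ℝ) / n))|
          ≤ (LD:ℝ) * (2 * ‖U t‖ + ε₁) := by
        calc |W ((i.val : ℝ) / n) y|
              * |D (Θbar n t j - Θbar n t i) - D (θ t y - θ t ((i.val : ℝ) / n))|
            ≤ 1 * ((LD:ℝ) * (2 * ‖U t‖ + ε₁)) :=
              mul_le_mul hB hcd (abs_nonneg _) zero_le_one
        _ = (LD:ℝ) * (2 * ‖U t‖ + ε₁) := one_mul _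
      linarith
    -- the total coupling error
    have hsumbd : |(n:ℝ)⁻¹ * ∑ j, cellAvg W n i j * D (Θbar n t j - Θbar n t i)
        - ∫ y in (0:ℝ)..1, W ((i.val : ℝ) / n) y * D (θ t y - θ t ((i.val : ℝ) / n))|
        ≤ (KW:ℝ)/n + (LD:ℝ) * (2 * ‖U t‖ + ε₁) := by
      rw [hSrw, hsplit, ← Finset.sum_sub_distrib]
      have hterm : ∀ j : Fin n,
          |(∫ _y in ((j.val : ℝ) / n)..(((j.val : ℝ) + 1) / n),
              cellAvg W n i j * D (Θbar n t j - Θbar n t i))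
            - ∫ y in ((j.val : ℝ) / n)..(((j.val : ℝ) + 1) / n),
              W ((i.val : ℝ) / n) y * D (θ t y - θ t ((i.val : ℝ) / n))|
          ≤ ((KW:ℝ)/n + (LD:ℝ) * (2 * ‖U t‖ + ε₁)) * (1/n) := by
        intro j
        rw [← intervalIntegral.integral_sub intervalIntegrable_const (hφint j)]
        have hb := intervalIntegral.norm_integral_le_of_norm_le_const (hcellbd j)
        rw [Real.norm_eq_abs] at hb
        calc |∫ y in ((j.val : ℝ) / n)..(((j.val : ℝ) + 1) / n),
              (cellAvg W n i j * D (Θbar n t j - Θbar n t i)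
                - W ((i.val : ℝ) / n) y * D (θ t y - θ t ((i.val : ℝ) / n)))|
            ≤ ((KW:ℝ)/n + (LD:ℝ) * (2 * ‖U t‖ + ε₁)) * |(((j.val : ℝ) + 1) / n) - (j.val : ℝ) / n|
              := hb
        _ = ((KW:ℝ)/n + (LD:ℝ) * (2 * ‖U t‖ + ε₁)) * (1/n) := by
            rw [cell_len hn0 j, abs_of_nonneg (by positivity : (0:ℝ) ≤ 1/(n:ℝ))]
      calc |∑ j : Fin n, ((∫ _y in ((j.val : ℝ) / n)..(((j.val : ℝ) + 1) / n),
              cellAvg W n i j * D (Θbar n t j - Θbar n t i))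
            - ∫ y in ((j.val : ℝ) / n)..(((j.val : ℝ) + 1) / n),
              W ((i.val : ℝ) / n) y * D (θ t y - θ t ((i.val : ℝ) / n)))|
          ≤ ∑ j : Fin n, |(∫ _y in ((j.val : ℝ) / n)..(((j.val : ℝ) + 1) / n),
              cellAvg W n i j * D (Θbar n t j - Θbar n t i))
            - ∫ y in ((j.val : ℝ) / n)..(((j.val : ℝ) + 1) / n),
              W ((i.val : ℝ) / n) y * D (θ t y - θ t ((i.val : ℝ) / n))| :=
            Finset.abs_sum_le_sum_abs _ _
      _ ≤ ∑ _j : Fin n, ((KW:ℝ)/n + (LD:ℝ) * (2 * ‖U t‖ + ε₁)) * (1/n) :=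
            Finset.sum_le_sum (fun j _ => hterm j)
      _ = (KW:ℝ)/n + (LD:ℝ) * (2 * ‖U t‖ + ε₁) := by
            rw [Finset.sum_const, Finset.card_univ, Fintype.card_fin, nsmul_eq_mul]
            field_simp
    -- the f-term
    have hfd : |f (Θbar n t i) t - f (θ t ((i.val : ℝ) / n)) t| ≤ (Lf:ℝ) * ‖U t‖ := by
      have hl := (hf_lip t).dist_le_mul (Θbar n t i) (θ t ((i.val : ℝ) / n))
      rw [Real.dist_eq, Real.dist_eq] at hl
      calc |f (Θbar n t i) t - f (θ t ((i.val : ℝ) / n)) t|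
          ≤ (Lf:ℝ) * |Θbar n t i - θ t ((i.val : ℝ) / n)| := hl
      _ ≤ (Lf:ℝ) * ‖U t‖ := mul_le_mul_of_nonneg_left (hUle i) Lf.coe_nonneg
    have hLDe : (LD:ℝ) * ε₁ ≤ ρ/2 := by
      have h1 : ε₁ ≤ ρ / (2 * ((LD:ℝ) + 1)) := min_le_left _ _
      have h2 : (LD:ℝ) * ε₁ ≤ (LD:ℝ) * (ρ / (2 * ((LD:ℝ) + 1))) :=
        mul_le_mul_of_nonneg_left h1 LD.coe_nonneg
      have h3 : (LD:ℝ) * (ρ / (2 * ((LD:ℝ) + 1))) ≤ ρ/2 := by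
        rw [mul_comm, div_mul_eq_mul_div, div_le_div_iff₀ (by positivity) two_pos]
        nlinarith [hρ.le, LD.coe_nonneg]
      linarith
    have hrw : U' t i = (f (Θbar n t i) t - f (θ t ((i.val : ℝ) / n)) t)
        + ((n:ℝ)⁻¹ * ∑ j, cellAvg W n i j * D (Θbar n t j - Θbar n t i)
          - ∫ y in (0:ℝ)..1, W ((i.val : ℝ) / n) y * D (θ t y - θ t ((i.val : ℝ) / n))) := by
      simp only [hU']
      ring
    rw [Real.norm_eq_abs, hrw]
    calc |(f (Θbar n t i) t - f (θ t ((i.val : ℝ) / n)) t)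
        + ((n:ℝ)⁻¹ * ∑ j, cellAvg W n i j * D (Θbar n t j - Θbar n t i)
          - ∫ y in (0:ℝ)..1, W ((i.val : ℝ) / n) y * D (θ t y - θ t ((i.val : ℝ) / n)))|
        ≤ |f (Θbar n t i) t - f (θ t ((i.val : ℝ) / n)) t|
          + |(n:ℝ)⁻¹ * ∑ j, cellAvg W n i j * D (Θbar n t j - Θbar n t i)
          - ∫ y in (0:ℝ)..1, W ((i.val : ℝ) / n) y * D (θ t y - θ t ((i.val : ℝ) / n))| :=
          abs_add_le _ _
    _ ≤ (Lf:ℝ) * ‖U t‖ + ((KW:ℝ)/n + (LD:ℝ) * (2 * ‖U t‖ + ε₁)) := add_le_add hfd hsumbd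
    _ ≤ K * ‖U t‖ + ρ := by
        rw [hKdef]
        nlinarith [hKWn, hLDe, norm_nonneg (U t)]
  -- Grönwall
  have hGr := norm_le_gronwallBound_of_norm_deriv_right_le hUcont hUderiv hU0 hbound
    T ⟨hT.le, le_rfl⟩
  rw [sub_zero] at hGr
  have hUT : ‖U T‖ ≤ ε/2 := by
    calc ‖U T‖ ≤ gronwallBound ρ K ρ T := hGr
    _ = ρ * C₀ := by rw [gronwallBound_mul, ← hC₀def]
    _ = ε/2 := by
        rw [hρdef]
        field_simp
  -- conclude
  obtain ⟨i, hieq, hi1, hi2⟩ := interp_pick n hn0 (Θbar n T) x hx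
  rw [hieq]
  have hxin : x ∈ Icc (0:ℝ) 1 := ⟨hx.1, hx.2.le⟩
  have hUTi : |Θbar n T i - θ T ((i.val : ℝ) / n)| ≤ ε/2 := by
    have hle := norm_le_pi_norm (U T) i
    rw [Real.norm_eq_abs] at hle
    exact hle.trans hUT
  have hsecond : |θ T ((i.val : ℝ) / n) - θ T x| < ε/2 := by
    have hTT : T ∈ Icc (0:ℝ) T := ⟨hT.le, le_rfl⟩
    have hdist : dist ((T, (i.val : ℝ) / n) : ℝ × ℝ) (T, x) < δω := by
      rw [Prod.dist_eq]
      simp only [dist_self, Real.dist_eq]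
      have hlen := cell_len hn0 i
      have habs : |(i.val : ℝ) / n - x| ≤ 1 / n := by
        rw [abs_le]
        constructor <;> [linarith; linarith]
      calc max 0 |(i.val : ℝ) / n - x| = |(i.val : ℝ) / n - x| := max_eq_right (abs_nonneg _)
      _ ≤ 1 / n := habs
      _ < δω := hδn
    have h2 := hω (T, (i.val : ℝ) / n) (Set.mk_mem_prod hTT (hξmem i))
      (T, x) (Set.mk_mem_prod hTT hxin) hdist
    rw [Real.dist_eq] at h2
    have h3 : ε₁ ≤ ε/2 := min_le_right _ _
    calc |θ T ((i.val : ℝ) / n) - θ T x| < ε₁ := h2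
    _ ≤ ε/2 := h3
  have hrw : Θbar n T i - θ T x
      = (Θbar n T i - θ T ((i.val : ℝ) / n)) + (θ T ((i.val : ℝ) / n) - θ T x) := by ring
  calc |Θbar n T i - θ T x|
      = |(Θbar n T i - θ T ((i.val : ℝ) / n)) + (θ T ((i.val : ℝ) / n) - θ T x)| := by rw [hrw]
  _ ≤ |Θbar n T i - θ T ((i.val : ℝ) / n)| + |θ T ((i.val : ℝ) / n) - θ T x| := abs_add_le _ _
  _ < ε := by linarith
end

section
/- Derivative of the order parameter along the continuum Kuramoto flow: Let θ : [0,∞) × [0,1] → ℝ be continuous, with ∂ₜθ continuous, satisfying the homogeneous continuum Kuramoto model ∂ₜθ(t,x) = ∫₀¹ sin(θ(t,y) − θ(t,x)) dy for all t ≥ 0 and x ∈ [0,1]. Let r(t) = |∫₀¹ e^{iθ(t,y)} dy| and suppose that on some interval r(t) > 0 and ψ(t) ∈ ℝ satisfies r(t)·e^{iψ(t)} = ∫₀¹ e^{iθ(t,y)} dy. Then on that interval r is differentiable and dr/dt(t) = r(t)·∫₀¹ sin²(ψ(t) − θ(t,x)) dx. -/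
open Set Filter MeasureTheory Topology

/-- The order parameter `r[φ] = |∫₀¹ e^{iφ(y)} dy|` of a phase configuration `φ`. -/
noncomputable def orderParam (φ : ℝ → ℝ) : ℝ :=
  ‖(∫ y in (0:ℝ)..1, Complex.exp (Complex.I * (φ y : ℂ)))‖


private lemma expI_eq (x : ℝ) : Complex.exp (Complex.I * (x:ℂ)) =
    (Real.cos x : ℂ) + (Real.sin x : ℂ) * Complex.I := by
  rw [mul_comm, Complex.exp_mul_I, ← Complex.ofReal_cos, ← Complex.ofReal_sin]

private lemma expI_lip (a b : ℝ) :
    ‖Complex.exp (Complex.I * (a:ℂ)) - Complex.exp (Complex.I * (b:ℂ))‖ ≤ |a - b| := by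
  have h : ∀ c : ℝ, HasDerivWithinAt (fun x : ℝ => Complex.exp (Complex.I * (x:ℂ)))
      (Complex.exp (Complex.I * (c:ℂ)) * Complex.I) univ c := by
    intro c
    have h0 : HasDerivWithinAt (fun x : ℝ => ((x : ℝ) : ℂ)) 1 univ c := by
      simpa using (hasDerivAt_id c).ofReal_comp
    have h1 := (h0.const_mul Complex.I).cexp
    simpa using h1
  have := convex_univ.norm_image_sub_le_of_norm_hasDerivWithin_le
    (C := 1) (f' := fun c : ℝ => Complex.exp (Complex.I * (c:ℂ)) * Complex.I)
    (fun c _ => h c) (fun c _ => by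
      rw [norm_mul, Complex.norm_I, mul_one,
        Complex.norm_exp]
      norm_num [Complex.mul_re]) (mem_univ b) (mem_univ a)
  simpa [Real.norm_eq_abs] using this

private lemma re_term (r ψ a b : ℝ) :
    (starRingEnd ℂ ((r:ℂ) * Complex.exp (Complex.I * (ψ:ℂ))) *
      (Complex.I * Complex.exp (Complex.I * (a:ℂ)) * (b:ℂ))).re
      = r * b * Real.sin (ψ - a) := by
  simp [expI_eq, Complex.mul_re, Complex.mul_im, Real.sin_sub, map_add, map_mul,
    Complex.conj_ofReal, Complex.cos_ofReal_re, Complex.sin_ofReal_re]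
  ring

private lemma hasDerivWithinAt_Z (θ θt : ℝ → ℝ → ℝ)
    (hcont : ContinuousOn (fun p : ℝ × ℝ => θ p.1 p.2) (Ici 0 ×ˢ Icc 0 1))
    (hderiv : ∀ x ∈ Icc (0:ℝ) 1, ∀ t ∈ Ici (0:ℝ),
      HasDerivWithinAt (fun s => θ s x) (θt t x) (Ici 0) t)
    (htcont : ContinuousOn (fun p : ℝ × ℝ => θt p.1 p.2) (Ici 0 ×ˢ Icc 0 1))
    {t : ℝ} (ht : t ∈ Ici (0:ℝ)) :
    HasDerivWithinAt (fun s => ∫ y in (0:ℝ)..1, Complex.exp (Complex.I * (θ s y : ℂ)))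
      (∫ y in (0:ℝ)..1, Complex.I * Complex.exp (Complex.I * (θ t y : ℂ)) * (θt t y : ℂ))
      (Ici 0) t := by
  have hcy : ∀ s ∈ Ici (0:ℝ), ContinuousOn (fun y => θ s y) (Icc 0 1) := fun s hs =>
    hcont.comp (Continuous.continuousOn (continuous_const.prodMk continuous_id)) fun y hy => ⟨hs, hy⟩
  have hexpc : ∀ s ∈ Ici (0:ℝ),
      ContinuousOn (fun y => Complex.exp (Complex.I * (θ s y:ℂ))) (Icc 0 1) := fun s hs =>
    (Complex.continuous_exp.comp (continuous_const.mul Complex.continuous_ofReal)).comp_continuousOn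
      (hcy s hs)
  have hexpInt : ∀ s ∈ Ici (0:ℝ),
      IntervalIntegrable (fun y => Complex.exp (Complex.I * (θ s y : ℂ))) volume 0 1 := by
    intro s hs
    apply ContinuousOn.intervalIntegrable
    rw [uIcc_of_le zero_le_one]
    exact hexpc s hs
  -- bound on θt on a compact neighbourhood
  obtain ⟨C, hC⟩ := (isCompact_Icc.prod isCompact_Icc).exists_bound_of_continuousOn
    (htcont.mono (prod_mono (Icc_subset_Ici_self : Icc (0:ℝ) (t+1) ⊆ Ici 0) (subset_refl _)))
  have hLip : ∀ y ∈ Icc (0:ℝ) 1, ∀ s ∈ Icc (0:ℝ) (t+1), ∀ u ∈ Icc (0:ℝ) (t+1),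
      ‖θ s y - θ u y‖ ≤ C * ‖s - u‖ := by
    intro y hy s hs u hu
    exact (convex_Icc 0 (t+1)).norm_image_sub_le_of_norm_hasDerivWithin_le
      (fun v hv => (hderiv y hy v hv.1).mono Icc_subset_Ici_self)
      (fun v hv => hC (v, y) ⟨hv, hy⟩) hu hs
  rw [hasDerivWithinAt_iff_tendsto_slope]
  have htt : t ∈ Icc (0:ℝ) (t+1) := ⟨ht, by linarith⟩
  have htend : Tendsto (fun s => ∫ y in (0:ℝ)..1,
      (s - t)⁻¹ • (Complex.exp (Complex.I * (θ s y:ℂ)) - Complex.exp (Complex.I * (θ t y:ℂ))))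
      (𝓝[Ici 0 \ {t}] t)
      (𝓝 (∫ y in (0:ℝ)..1, Complex.I * Complex.exp (Complex.I * (θ t y : ℂ)) * (θt t y : ℂ))) := by
    apply intervalIntegral.tendsto_integral_filter_of_dominated_convergence (fun _ => C)
    · filter_upwards [self_mem_nhdsWithin] with s hs
      apply ContinuousOn.aestronglyMeasurable _ measurableSet_uIoc
      exact (((hexpc s hs.1).sub (hexpc t ht)).const_smul ((s - t)⁻¹)).mono
        (by rw [uIoc_of_le zero_le_one]; exact Ioc_subset_Icc_self)
    · have hmem : ∀ᶠ s in 𝓝[Ici 0 \ {t}] t, s ∈ (Ici 0 \ {t}) ∩ Metric.ball t 1 :=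
        inter_mem self_mem_nhdsWithin (mem_nhdsWithin_of_mem_nhds (Metric.ball_mem_nhds t one_pos))
      filter_upwards [hmem] with s hs
      refine ae_of_all _ fun y hy => ?_
      have hy' : y ∈ Icc (0:ℝ) 1 := Ioc_subset_Icc_self (by rwa [uIoc_of_le zero_le_one] at hy)
      have hst : s ∈ Icc (0:ℝ) (t+1) := by
        have := Metric.mem_ball.mp hs.2
        rw [Real.dist_eq] at this
        obtain ⟨h1, h2⟩ := abs_lt.mp this
        exact ⟨hs.1.1, by linarith⟩
      have hne : s ≠ t := hs.1.2
      have h1 : ‖Complex.exp (Complex.I * (θ s y:ℂ)) - Complex.exp (Complex.I * (θ t y:ℂ))‖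
          ≤ C * |s - t| :=
        le_trans (expI_lip _ _) (by simpa [Real.norm_eq_abs] using hLip y hy' s hst t htt)
      rw [norm_smul, Real.norm_eq_abs, abs_inv]
      have hpos : 0 < |s - t| := abs_pos.mpr (sub_ne_zero.mpr hne)
      calc |s - t|⁻¹ * ‖Complex.exp (Complex.I * (θ s y:ℂ)) - Complex.exp (Complex.I * (θ t y:ℂ))‖
          ≤ |s - t|⁻¹ * (C * |s - t|) :=
            mul_le_mul_of_nonneg_left h1 (inv_nonneg.mpr hpos.le)
        _ = C := by field_simp
    · exact intervalIntegrable_const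
    · refine ae_of_all _ fun y hy => ?_
      have hy' : y ∈ Icc (0:ℝ) 1 := Ioc_subset_Icc_self (by rwa [uIoc_of_le zero_le_one] at hy)
      have hdy := hderiv y hy' t ht
      have h1 : HasDerivWithinAt (fun s => ((θ s y : ℝ) : ℂ)) ((θt t y : ℂ)) (Ici 0) t := by
        exact Complex.ofRealCLM.hasFDerivAt.comp_hasDerivWithinAt t hdy
      have h3 : HasDerivWithinAt (fun s => Complex.exp (Complex.I * (θ s y : ℂ)))
          (Complex.I * Complex.exp (Complex.I * (θ t y:ℂ)) * (θt t y:ℂ)) (Ici 0) t := by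
        have h2 := (h1.const_mul Complex.I).cexp
        convert h2 using 1
        ring
      rw [hasDerivWithinAt_iff_tendsto_slope] at h3
      exact h3.congr fun s => (slope_def_module _ _ _)
  refine htend.congr' ?_
  filter_upwards [self_mem_nhdsWithin] with s hs
  rw [slope_def_module, ← intervalIntegral.integral_sub (hexpInt s hs.1) (hexpInt t ht),
    ← intervalIntegral.integral_smul]

/-- Derivative of the order parameter along the continuum Kuramoto flow: if `θ`
solves `∂ₜθ(t,x) = ∫₀¹ sin(θ(t,y) − θ(t,x)) dy` (with time derivative `θt`), and on an
interval `J ⊆ [0,∞)` the order parameter `r(t) = r[θ(t,·)]` is positive with average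
phase `ψ(t)`, then on `J` the function `r` is differentiable with
`dr/dt = r(t)·∫₀¹ sin²(ψ(t) − θ(t,x)) dx`. -/
theorem statement10 (θ θt : ℝ → ℝ → ℝ)
    (hcont : ContinuousOn (fun p : ℝ × ℝ => θ p.1 p.2) (Ici 0 ×ˢ Icc 0 1))
    (hderiv : ∀ x ∈ Icc (0:ℝ) 1, ∀ t ∈ Ici (0:ℝ),
      HasDerivWithinAt (fun s => θ s x) (θt t x) (Ici 0) t)
    (htcont : ContinuousOn (fun p : ℝ × ℝ => θt p.1 p.2) (Ici 0 ×ˢ Icc 0 1))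
    (hode : ∀ t ∈ Ici (0:ℝ), ∀ x ∈ Icc (0:ℝ) 1,
      θt t x = ∫ y in (0:ℝ)..1, Real.sin (θ t y - θ t x))
    (J : Set ℝ) (hJ : J ⊆ Ici 0) (hJconn : J.OrdConnected)
    (ψ : ℝ → ℝ)
    (hrψ : ∀ t ∈ J, 0 < orderParam (θ t) ∧
      (orderParam (θ t) : ℂ) * Complex.exp (Complex.I * (ψ t : ℂ)) =
        ∫ y in (0:ℝ)..1, Complex.exp (Complex.I * (θ t y : ℂ))) :
    ∀ t ∈ J, HasDerivWithinAt (fun s => orderParam (θ s))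
      (orderParam (θ t) * ∫ x in (0:ℝ)..1, Real.sin (ψ t - θ t x) ^ 2) J t := by
  intro t htJ
  have ht : t ∈ Ici (0:ℝ) := hJ htJ
  obtain ⟨hr, hZψ⟩ := hrψ t htJ
  set r := orderParam (θ t) with hrdef
  have hcy : ∀ s ∈ Ici (0:ℝ), ContinuousOn (fun y => θ s y) (Icc 0 1) := fun s hs =>
    hcont.comp (Continuous.continuousOn (continuous_const.prodMk continuous_id))
      fun y hy => ⟨hs, hy⟩
  have hexpc : ∀ s ∈ Ici (0:ℝ),
      ContinuousOn (fun y => Complex.exp (Complex.I * (θ s y:ℂ))) (Icc 0 1) := fun s hs =>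
    (Complex.continuous_exp.comp
      (continuous_const.mul Complex.continuous_ofReal)).comp_continuousOn (hcy s hs)
  have hexpInt : IntervalIntegrable (fun y => Complex.exp (Complex.I * (θ t y : ℂ))) volume 0 1 := by
    apply ContinuousOn.intervalIntegrable
    rw [uIcc_of_le zero_le_one]
    exact hexpc t ht
  have hsc : ContinuousOn (fun y => Real.sin (ψ t - θ t y)) (Icc 0 1) :=
    Real.continuous_sin.comp_continuousOn (continuousOn_const.sub (hcy t ht))
  -- Step A: closed form of the velocity field
  have hA : ∀ x ∈ Icc (0:ℝ) 1, θt t x = r * Real.sin (ψ t - θ t x) := by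
    intro x hx
    rw [hode t ht x hx]
    have h1 : ∀ y : ℝ, Real.sin (θ t y - θ t x) =
        (Complex.exp (Complex.I * (θ t y:ℂ)) * Complex.exp (-(Complex.I * (θ t x:ℂ)))).im := by
      intro y
      rw [← Complex.exp_add]
      have he : Complex.I * (θ t y:ℂ) + -(Complex.I * (θ t x:ℂ))
          = ((θ t y - θ t x : ℝ):ℂ) * Complex.I := by push_cast; ring
      rw [he, Complex.exp_ofReal_mul_I_im]
    simp_rw [h1]
    have h2 := Complex.imCLM.intervalIntegral_comp_comm
      (hexpInt.mul_const (Complex.exp (-(Complex.I * (θ t x:ℂ)))))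
    simp only [Complex.imCLM_apply] at h2
    rw [h2, intervalIntegral.integral_mul_const, ← hZψ]
    have h3 : (r:ℂ) * Complex.exp (Complex.I * (ψ t:ℂ)) * Complex.exp (-(Complex.I * (θ t x:ℂ)))
        = (r:ℂ) * Complex.exp (((ψ t - θ t x : ℝ):ℂ) * Complex.I) := by
      rw [mul_assoc, ← Complex.exp_add]
      congr 2
      push_cast
      ring
    rw [h3]
    simp only [Complex.mul_im, Complex.ofReal_re, Complex.ofReal_im,
      Complex.exp_ofReal_mul_I_im, Complex.exp_ofReal_mul_I_re]
    ring
  -- Step B: derivative of the complex order parameter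
  have hZd : HasDerivWithinAt (fun s => ∫ y in (0:ℝ)..1, Complex.exp (Complex.I * (θ s y:ℂ)))
      (∫ y in (0:ℝ)..1, Complex.I * Complex.exp (Complex.I * (θ t y:ℂ)) * (θt t y:ℂ)) J t :=
    (hasDerivWithinAt_Z θ θt hcont hderiv htcont ht).mono hJ
  set W := ∫ y in (0:ℝ)..1, Complex.I * Complex.exp (Complex.I * (θ t y:ℂ)) * (θt t y:ℂ)
    with hWdef
  set Z := ∫ y in (0:ℝ)..1, Complex.exp (Complex.I * (θ t y:ℂ)) with hZdef
  have hZabs : ‖Z‖ = r := by rw [hrdef]; rfl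
  have hZne : Z ≠ 0 := by
    intro h0
    rw [← hZabs, h0] at hr
    simp at hr
  -- components
  have hre : HasDerivWithinAt (fun s =>
      (∫ y in (0:ℝ)..1, Complex.exp (Complex.I * (θ s y:ℂ))).re) W.re J t := by
    exact Complex.reCLM.hasFDerivAt.comp_hasDerivWithinAt t hZd
  have him : HasDerivWithinAt (fun s =>
      (∫ y in (0:ℝ)..1, Complex.exp (Complex.I * (θ s y:ℂ))).im) W.im J t := by
    exact Complex.imCLM.hasFDerivAt.comp_hasDerivWithinAt t hZd
  have hq : HasDerivWithinAt (fun s =>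
      (∫ y in (0:ℝ)..1, Complex.exp (Complex.I * (θ s y:ℂ))).re
        * (∫ y in (0:ℝ)..1, Complex.exp (Complex.I * (θ s y:ℂ))).re
      + (∫ y in (0:ℝ)..1, Complex.exp (Complex.I * (θ s y:ℂ))).im
        * (∫ y in (0:ℝ)..1, Complex.exp (Complex.I * (θ s y:ℂ))).im)
      (W.re * Z.re + Z.re * W.re + (W.im * Z.im + Z.im * W.im)) J t := (hre.mul hre).add (him.mul him)
  have hne : Z.re * Z.re + Z.im * Z.im ≠ 0 := by
    rw [← Complex.normSq_apply]
    exact (Complex.normSq_pos.mpr hZne).ne'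
  have hs := hq.sqrt hne
  have hfun : (fun s => orderParam (θ s)) = fun s =>
      Real.sqrt ((∫ y in (0:ℝ)..1, Complex.exp (Complex.I * (θ s y:ℂ))).re
        * (∫ y in (0:ℝ)..1, Complex.exp (Complex.I * (θ s y:ℂ))).re
      + (∫ y in (0:ℝ)..1, Complex.exp (Complex.I * (θ s y:ℂ))).im
        * (∫ y in (0:ℝ)..1, Complex.exp (Complex.I * (θ s y:ℂ))).im) :=
    funext fun s => by rw [orderParam, Complex.norm_def, Complex.normSq_apply]
  rw [hfun]
  -- compute conj Z * W
  have hW : W = ∫ y in (0:ℝ)..1, Complex.I * Complex.exp (Complex.I * (θ t y:ℂ))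
      * ((r * Real.sin (ψ t - θ t y) : ℝ):ℂ) := by
    rw [hWdef]
    refine intervalIntegral.integral_congr fun y hy => ?_
    rw [hA y (by rwa [uIcc_of_le zero_le_one] at hy)]
  have hintW : IntervalIntegrable (fun y => starRingEnd ℂ Z * (Complex.I
      * Complex.exp (Complex.I * (θ t y:ℂ)) * ((r * Real.sin (ψ t - θ t y) : ℝ):ℂ))) volume 0 1 := by
    apply ContinuousOn.intervalIntegrable
    rw [uIcc_of_le zero_le_one]
    exact continuousOn_const.mul ((continuousOn_const.mul (hexpc t ht)).mul
      (Complex.continuous_ofReal.comp_continuousOn (continuousOn_const.mul hsc)))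
  have hconjW : (starRingEnd ℂ Z * W).re
      = r ^ 2 * ∫ x in (0:ℝ)..1, Real.sin (ψ t - θ t x) ^ 2 := by
    rw [hW, ← intervalIntegral.integral_const_mul]
    have h2 := Complex.reCLM.intervalIntegral_comp_comm hintW
    simp only [Complex.reCLM_apply] at h2
    rw [← h2, ← hZψ]
    have h3 : ∀ y : ℝ, (starRingEnd ℂ ((r:ℂ) * Complex.exp (Complex.I * (ψ t:ℂ)))
        * (Complex.I * Complex.exp (Complex.I * (θ t y:ℂ))
          * ((r * Real.sin (ψ t - θ t y) : ℝ):ℂ))).re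
        = r ^ 2 * Real.sin (ψ t - θ t y) ^ 2 := by
      intro y
      rw [re_term r (ψ t) (θ t y) (r * Real.sin (ψ t - θ t y))]
      ring
    simp_rw [h3, intervalIntegral.integral_const_mul]
  -- finish
  convert hs using 1
  rw [show Real.sqrt (Z.re * Z.re + Z.im * Z.im) = r by
    rw [← Complex.normSq_apply, ← Complex.norm_def, hZabs]]
  have hre2 : W.re * Z.re + Z.re * W.re + (W.im * Z.im + Z.im * W.im)
      = 2 * (starRingEnd ℂ Z * W).re := by
    simp [Complex.mul_re]
    ring
  rw [hre2, hconjW]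
  have hrne : r ≠ 0 := ne_of_gt hr
  field_simp
end

section
/- Strict growth of the order parameter below full coherence: Let φ : [0,1] → ℝ be continuous with 0 < r[φ] < 1, and let ψ ∈ ℝ satisfy r[φ]·e^{iψ} = ∫₀¹ e^{iφ(y)} dy. Then ∫₀¹ sin²(ψ − φ(x)) dx > 0. -/
open Set

/-- Strict growth of the order parameter below full coherence: if `0 < r[φ] < 1` and
`ψ` is an average phase of `φ`, then `∫₀¹ sin²(ψ − φ(x)) dx > 0`. -/
theorem statement11 (φ : ℝ → ℝ) (hφ : ContinuousOn φ (Icc 0 1))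
    (hr : orderParam φ ∈ Ioo (0:ℝ) 1) (ψ : ℝ)
    (hψ : (orderParam φ : ℂ) * Complex.exp (Complex.I * (ψ : ℂ)) =
      ∫ y in (0:ℝ)..1, Complex.exp (Complex.I * (φ y : ℂ))) :
    0 < ∫ x in (0:ℝ)..1, Real.sin (ψ - φ x) ^ 2 := by
  obtain ⟨hr0, hr1⟩ := hr
  set g : ℝ → ℝ := fun x => Real.cos (ψ - φ x) with hg
  have hgc : ContinuousOn g (Icc 0 1) :=
    Real.continuous_cos.comp_continuousOn (continuousOn_const.sub hφ)
  have hsc : ContinuousOn (fun x => Real.sin (ψ - φ x) ^ 2) (Icc 0 1) :=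
    (Real.continuous_sin.comp_continuousOn (continuousOn_const.sub hφ)).pow 2
  -- key: there is a point where sin(ψ - φ x) ≠ 0
  have key : ∃ c ∈ Icc (0:ℝ) 1, Real.sin (ψ - φ c) ≠ 0 := by
    by_contra hsin
    push_neg at hsin
    -- then cos(ψ - φ x) = ±1 everywhere on [0,1]
    have hpm : ∀ x ∈ Icc (0:ℝ) 1, g x = 1 ∨ g x = -1 := by
      intro x hx
      have h1 : Real.sin (ψ - φ x) ^ 2 + g x ^ 2 = 1 := Real.sin_sq_add_cos_sq _
      rw [hsin x hx] at h1
      have : g x * g x = 1 := by nlinarith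
      exact mul_self_eq_one_iff.mp this
    -- by the intermediate value theorem, g is constant on [0,1]
    have h0m : (0:ℝ) ∈ Icc (0:ℝ) 1 := ⟨le_refl _, zero_le_one⟩
    have hconst : ∀ x ∈ Icc (0:ℝ) 1, g x = g 0 := by
      intro x hx
      by_contra hne
      have hsub : uIcc (0:ℝ) x ⊆ Icc 0 1 := by
        rw [uIcc_of_le hx.1]
        exact Icc_subset_Icc le_rfl hx.2
      have hzero : (0:ℝ) ∈ uIcc (g 0) (g x) := by
        rcases hpm 0 h0m with h0 | h0 <;> rcases hpm x hx with hx' | hx' <;>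
          rw [h0, hx'] at hne ⊢ <;> first
            | exact absurd rfl hne
            | simp [uIcc_of_le, uIcc_of_ge, mem_Icc]
      obtain ⟨y, hy, hy0⟩ := intermediate_value_uIcc (hgc.mono hsub) hzero
      rcases hpm y (hsub hy) with h | h <;> rw [hy0] at h <;> norm_num at h
    -- so exp(I φ y) is constant on [0,1]
    have hexp : ∀ y ∈ Icc (0:ℝ) 1,
        Complex.exp (Complex.I * (φ y : ℂ)) = (g 0 : ℂ) * Complex.exp (Complex.I * (ψ : ℂ)) := by
      intro y hy
      have h1 : Complex.exp (Complex.I * (φ y : ℂ)) =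
          Complex.exp (Complex.I * (ψ : ℂ)) * Complex.exp (((φ y - ψ : ℝ) : ℂ) * Complex.I) := by
        rw [← Complex.exp_add]
        ring_nf
        push_cast
        ring_nf
      rw [h1, Complex.exp_mul_I]
      have hsiny : Real.sin (φ y - ψ) = 0 := by
        have := hsin y hy
        rw [show φ y - ψ = -(ψ - φ y) by ring, Real.sin_neg, this, neg_zero]
      have hcosy : Real.cos (φ y - ψ) = g 0 := by
        rw [show φ y - ψ = -(ψ - φ y) by ring, Real.cos_neg]
        exact hconst y hy
      rw [show Complex.cos ((φ y - ψ : ℝ) : ℂ) = ((Real.cos (φ y - ψ) : ℝ) : ℂ) by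
            rw [Complex.ofReal_cos],
          show Complex.sin ((φ y - ψ : ℝ) : ℂ) = ((Real.sin (φ y - ψ) : ℝ) : ℂ) by
            rw [Complex.ofReal_sin],
          hsiny, hcosy]
      push_cast
      ring
    -- hence the integral equals g 0 * exp(I ψ)
    have hint : (∫ y in (0:ℝ)..1, Complex.exp (Complex.I * (φ y : ℂ))) =
        (g 0 : ℂ) * Complex.exp (Complex.I * (ψ : ℂ)) := by
      rw [intervalIntegral.integral_congr (g := fun _ => (g 0 : ℂ) * Complex.exp (Complex.I * (ψ : ℂ)))
        (by rw [uIcc_of_le zero_le_one]; exact fun y hy => hexp y hy)]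
      simp
    rw [hint] at hψ
    have hexp_ne : Complex.exp (Complex.I * (ψ : ℂ)) ≠ 0 := Complex.exp_ne_zero _
    have : (orderParam φ : ℂ) = (g 0 : ℂ) := mul_right_cancel₀ hexp_ne hψ
    have hr_eq : orderParam φ = g 0 := by exact_mod_cast this
    rcases hpm 0 h0m with h | h <;> rw [h] at hr_eq <;> linarith
  -- conclude positivity of the integral
  obtain ⟨c, hc, hcne⟩ := key
  have h := intervalIntegral.integral_lt_integral_of_continuousOn_of_le_of_exists_lt
    (f := fun _ => (0:ℝ)) (g := fun x => Real.sin (ψ - φ x) ^ 2) zero_lt_one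
    continuousOn_const hsc (fun x _ => sq_nonneg _)
    ⟨c, hc, by positivity⟩
  simpa using h
end

section
/- Half-angle transformation identity: Let B ∈ (−1,1) and C ∈ (−π,π), and define A := 2·arctan( √((1+B)/(1−B)) · tan(C/2) ). Then 1 − B·cos(C) > 0, and sin(A) = √(1−B²)·sin(C) / (1 − B·cos(C)) and cos(A) = (cos(C) − B) / (1 − B·cos(C)). -/
open Set

set_option maxHeartbeats 1000000 in
/-- Half-angle transformation identity: for `B ∈ (−1,1)` and `C ∈ (−π,π)`, with
`A := 2·arctan(√((1+B)/(1−B))·tan(C/2))`, one has `1 − B·cos C > 0`,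
`sin A = √(1−B²)·sin C/(1 − B·cos C)` and `cos A = (cos C − B)/(1 − B·cos C)`. -/
theorem statement17 (B C : ℝ) (hB : B ∈ Ioo (-1:ℝ) 1) (hC : C ∈ Ioo (-Real.pi) Real.pi) :
    0 < 1 - B * Real.cos C ∧
    Real.sin (2 * Real.arctan (Real.sqrt ((1 + B) / (1 - B)) * Real.tan (C / 2))) =
      Real.sqrt (1 - B ^ 2) * Real.sin C / (1 - B * Real.cos C) ∧
    Real.cos (2 * Real.arctan (Real.sqrt ((1 + B) / (1 - B)) * Real.tan (C / 2))) =
      (Real.cos C - B) / (1 - B * Real.cos C) := by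
  obtain ⟨hB1, hB2⟩ := hB
  obtain ⟨hC1, hC2⟩ := hC
  have hb1 : (0:ℝ) < 1 + B := by linarith
  have hb2 : (0:ℝ) < 1 - B := by linarith
  have hcos1 := Real.neg_one_le_cos C
  have hcos2 := Real.cos_le_one C
  have hpos : 0 < 1 - B * Real.cos C := by
    nlinarith [sq_nonneg (B + Real.cos C), sq_nonneg (B - Real.cos C), sq_nonneg (B * Real.cos C)]
  set c := Real.cos (C/2) with hcdef
  set s := Real.sin (C/2) with hsdef
  have hc : 0 < c := Real.cos_pos_of_mem_Ioo ⟨by linarith, by linarith⟩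
  have hcosC : Real.cos C = 2*c^2 - 1 := by
    rw [show C = 2*(C/2) by ring, Real.cos_two_mul]
  have hsinC : Real.sin C = 2*s*c := by
    rw [show C = 2*(C/2) by ring, Real.sin_two_mul]
  have hsc : s^2 + c^2 = 1 := Real.sin_sq_add_cos_sq _
  set k := Real.sqrt ((1+B)/(1-B)) with hkdef
  have hk0 : 0 ≤ k := Real.sqrt_nonneg _
  have hk2 : k^2 = (1+B)/(1-B) := Real.sq_sqrt (by positivity)
  have ht : Real.tan (C/2) = s / c := Real.tan_eq_sin_div_cos _
  set x := k * Real.tan (C/2) with hxdef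
  have hx2 : x^2 = (1+B)*s^2 / ((1-B)*c^2) := by
    rw [hxdef, ht, mul_pow, hk2, div_pow]
    field_simp
  have h1x : 1 + x^2 = (1 - B*Real.cos C)/((1-B)*c^2) := by
    rw [hx2, hcosC]
    field_simp
    nlinarith [hsc]
  have h1xpos : 0 < 1 + x^2 := by positivity
  have hsinA : Real.sin (2 * Real.arctan x) = 2*x/(1+x^2) := by
    rw [Real.sin_two_mul, Real.sin_arctan, Real.cos_arctan]
    rw [mul_assoc, div_mul_div_comm, Real.mul_self_sqrt (by positivity : (0:ℝ) ≤ 1+x^2), mul_one]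
    ring
  have hcosA : Real.cos (2 * Real.arctan x) = (1-x^2)/(1+x^2) := by
    rw [Real.cos_two_mul, Real.cos_arctan, div_pow, one_pow,
      Real.sq_sqrt (by positivity : (0:ℝ) ≤ 1+x^2)]
    field_simp
    ring
  have hk3 : k * (1 - B) = Real.sqrt (1 - B^2) := by
    have h1 : Real.sqrt (1-B^2) = Real.sqrt (1+B) * Real.sqrt (1-B) := by
      rw [← Real.sqrt_mul hb1.le]; ring_nf
    have h2 : k = Real.sqrt (1+B) / Real.sqrt (1-B) := Real.sqrt_div hb1.le _
    have h3 : Real.sqrt (1-B) ^ 2 = 1 - B := Real.sq_sqrt hb2.le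
    have h4 : (0:ℝ) < Real.sqrt (1-B) := Real.sqrt_pos.mpr hb2
    have h5 : (1:ℝ)-B = Real.sqrt (1-B) * Real.sqrt (1-B) := (Real.mul_self_sqrt hb2.le).symm
    rw [h1, h2, h5]
    field_simp
    rw [Real.sqrt_sq h4.le]
  refine ⟨hpos, ?_, ?_⟩
  · have key : 2*x*((1-B)*c^2) = Real.sqrt (1-B^2) * Real.sin C := by
      rw [hxdef, ht, hsinC, ← hk3]
      field_simp
    rw [hsinA, h1x, div_div_eq_mul_div, key]
  · have h5 : (1-B)*c^2 ≠ 0 := mul_ne_zero hb2.ne' (pow_ne_zero 2 hc.ne')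
    have hnum : 1 - x^2 = (Real.cos C - B)/((1-B)*c^2) := by
      rw [hx2, hcosC, eq_div_iff h5, sub_mul, div_mul_cancel₀ _ h5]
      nlinarith [hsc]
    rw [hcosA, hnum, h1x, div_div_div_cancel_right₀ h5]
end

section
/- Almost sure eventual degree and codegree bounds for Erdős–Rényi graphs: Fix p ∈ (0,1]. For each n ∈ ℕ let Aⁿ be the adjacency matrix of an Erdős–Rényi graph G(n,p), with all edge indicator variables (across all n and all pairs i ≤ j) independent on a common probability space. Then almost surely there exists n̄ ∈ ℕ such that for all n ≥ n̄: (i) for every i ∈ {1,…,n}, Σ_{k=1}ⁿ Aⁿᵢₖ ≤ p·(n + n^{2/3}); and (ii) for every pair i ≠ j in {1,…,n}, Σ_{k=1}ⁿ min(Aⁿᵢₖ, Aⁿⱼₖ) ≥ p²·(n − n^{2/3}). -/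
open MeasureTheory Set Filter

/-- The Bernoulli measure on `Bool` with success probability `p` (clipped to `[0,1]`;
below one always has `0 ≤ p ≤ 1`). -/
noncomputable def bern (p : ℝ) : Measure Bool :=
  (PMF.bernoulli (min (Real.toNNReal p) 1) (min_le_right _ _)).toMeasure

instance (p : ℝ) : IsProbabilityMeasure (bern p) :=
  PMF.toMeasure.isProbabilityMeasure _

namespace ER19

noncomputable def bi (b : Bool) : ℝ := if b then 1 else 0

lemma bi_nonneg (b : Bool) : 0 ≤ bi b := by unfold bi; split <;> norm_num
lemma bi_le_one (b : Bool) : bi b ≤ 1 := by unfold bi; split <;> norm_num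
lemma bi_mem (b : Bool) : bi b = 0 ∨ bi b = 1 := by unfold bi; split <;> simp
lemma measurable_bi : Measurable bi := Measurable.of_discrete

section Chernoff

open Real

variable {Ω ι κ : Type*} [MeasurableSpace Ω] {μ : Measure Ω} [IsProbabilityMeasure μ]
  {W : ι → Ω → Bool} {r : ℝ}

omit [IsProbabilityMeasure μ] in
lemma measurable_prod_bi (hW : ∀ i, Measurable (W i)) (T : Finset ι) :
    Measurable (fun ω => ∏ i ∈ T, bi (W i ω)) :=
  Finset.measurable_prod _ (fun i _ => measurable_bi.comp (hW i))

omit [MeasurableSpace Ω] in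
lemma prod_bi_nonneg (T : Finset ι) (ω : Ω) : 0 ≤ ∏ i ∈ T, bi (W i ω) :=
  Finset.prod_nonneg fun i _ => bi_nonneg _

omit [MeasurableSpace Ω] in
lemma prod_bi_le_one (T : Finset ι) (ω : Ω) : ∏ i ∈ T, bi (W i ω) ≤ 1 :=
  Finset.prod_le_one (fun _ _ => bi_nonneg _) (fun _ _ => bi_le_one _)

omit [IsProbabilityMeasure μ] in
lemma integrable_prod_bi (hW : ∀ i, Measurable (W i)) [IsFiniteMeasure μ] (T : Finset ι) :
    Integrable (fun ω => ∏ i ∈ T, bi (W i ω)) μ := by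
  refine Integrable.mono' (integrable_const (1:ℝ))
    (measurable_prod_bi hW T).aestronglyMeasurable ?_
  refine ae_of_all _ fun ω => ?_
  rw [Real.norm_eq_abs, abs_of_nonneg (prod_bi_nonneg T ω)]
  exact prod_bi_le_one T ω

omit [MeasurableSpace Ω] in
lemma prod_bi_mem (T : Finset ι) (ω : Ω) :
    (∏ i ∈ T, bi (W i ω)) = 0 ∨ (∏ i ∈ T, bi (W i ω)) = 1 := by
  refine Finset.prod_induction _ (fun x => x = 0 ∨ x = 1) ?_ (Or.inr rfl)
    (fun i _ => bi_mem _)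
  rintro a b (rfl | rfl) (rfl | rfl) <;> simp

lemma integral_prod_bi (hW : ∀ i, Measurable (W i))
    (hindep : ProbabilityTheory.iIndepFun W μ)
    (hr0 : 0 ≤ r) (hr : ∀ i, μ (W i ⁻¹' {true}) = ENNReal.ofReal r)
    (T : Finset ι) :
    ∫ ω, ∏ i ∈ T, bi (W i ω) ∂μ = r ^ T.card := by
  have hS : MeasurableSet (⋂ i ∈ (T : Set ι), W i ⁻¹' {true}) :=
    MeasurableSet.biInter T.countable_toSet (fun i _ => (hW i) (by trivial))
  have hfun : (fun ω => ∏ i ∈ T, bi (W i ω)) =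
      Set.indicator (⋂ i ∈ (T : Set ι), W i ⁻¹' {true}) (fun _ => (1:ℝ)) := by
    funext ω
    by_cases h : ω ∈ ⋂ i ∈ (T : Set ι), W i ⁻¹' {true}
    · rw [Set.indicator_of_mem h]
      simp only [Set.mem_iInter, Set.mem_preimage, Set.mem_singleton_iff] at h
      refine Finset.prod_eq_one fun i hi => ?_
      simp [bi, h i hi]
    · rw [Set.indicator_of_notMem h]
      simp only [Set.mem_iInter, Set.mem_preimage, Set.mem_singleton_iff, not_forall] at h
      obtain ⟨i, hi, hne⟩ := h
      refine Finset.prod_eq_zero hi ?_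
      simp [bi, hne]
  have hint : ∫ ω, ∏ i ∈ T, bi (W i ω) ∂μ
      = (μ (⋂ i ∈ (T : Set ι), W i ⁻¹' {true})).toReal := by
    rw [hfun]; exact integral_indicator_one hS
  rw [hint]
  have hmeasb : μ (⋂ i ∈ T, W i ⁻¹' {true}) = ∏ i ∈ T, μ (W i ⁻¹' {true}) :=
    hindep.meas_biInter (fun i _ => ⟨{true}, trivial, rfl⟩)
  have : (⋂ i ∈ (T : Set ι), W i ⁻¹' {true}) = ⋂ i ∈ T, W i ⁻¹' {true} := by simp
  rw [this, hmeasb]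
  simp only [hr, Finset.prod_const]
  rw [← ENNReal.ofReal_pow hr0, ENNReal.toReal_ofReal (pow_nonneg hr0 _)]

/-- Expansion of the expectation of a product over independent blocks. -/
lemma integral_prod_one_add (hW : ∀ i, Measurable (W i))
    (hindep : ProbabilityTheory.iIndepFun W μ)
    (hr0 : 0 ≤ r) (hr : ∀ i, μ (W i ⁻¹' {true}) = ENNReal.ofReal r)
    (s : Finset κ) (B : κ → Finset ι)
    (hdisj : ∀ k ∈ s, ∀ l ∈ s, k ≠ l → Disjoint (B k) (B l)) (c : ℝ) :
    ∫ ω, ∏ k ∈ s, (1 + c * ∏ i ∈ B k, bi (W i ω)) ∂μ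
      = ∏ k ∈ s, (1 + c * r ^ (B k).card) := by
  classical
  have expand : ∀ ω, ∏ k ∈ s, (1 + c * ∏ i ∈ B k, bi (W i ω))
      = ∑ t ∈ s.powerset, c ^ t.card * ∏ i ∈ t.biUnion B, bi (W i ω) := by
    intro ω
    have h1 : ∀ k ∈ s, (1 + c * ∏ i ∈ B k, bi (W i ω))
        = (c * ∏ i ∈ B k, bi (W i ω)) + 1 := fun k _ => by ring
    rw [Finset.prod_congr rfl h1, Finset.prod_add]
    refine Finset.sum_congr rfl fun t ht => ?_
    rw [Finset.prod_const_one, mul_one, Finset.prod_mul_distrib, Finset.prod_const,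
      Finset.prod_biUnion]
    intro k hk l hl hkl
    exact hdisj k (Finset.mem_powerset.1 ht hk) l (Finset.mem_powerset.1 ht hl) hkl
  have hint : ∫ ω, ∏ k ∈ s, (1 + c * ∏ i ∈ B k, bi (W i ω)) ∂μ
      = ∑ t ∈ s.powerset, c ^ t.card * (r ^ (t.biUnion B).card) := by
    rw [show (fun ω => ∏ k ∈ s, (1 + c * ∏ i ∈ B k, bi (W i ω)))
        = fun ω => ∑ t ∈ s.powerset, c ^ t.card * ∏ i ∈ t.biUnion B, bi (W i ω)
      from funext expand]
    rw [integral_finset_sum _ (fun t _ => ((integrable_prod_bi hW _).const_mul _))]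
    refine Finset.sum_congr rfl fun t _ => ?_
    rw [integral_const_mul, integral_prod_bi hW hindep hr0 hr]
  rw [hint]
  have hcard : ∀ t ∈ s.powerset, r ^ (t.biUnion B).card = ∏ k ∈ t, r ^ (B k).card := by
    intro t ht
    rw [Finset.card_biUnion, ← Finset.prod_pow_eq_pow_sum]
    intro k hk l hl hkl
    exact hdisj k (Finset.mem_powerset.1 ht hk) l (Finset.mem_powerset.1 ht hl) hkl
  calc ∑ t ∈ s.powerset, c ^ t.card * r ^ (t.biUnion B).card
      = ∑ t ∈ s.powerset, (∏ k ∈ t, (c * r ^ (B k).card)) * ∏ k ∈ s \ t, (1:ℝ) := by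
        refine Finset.sum_congr rfl fun t ht => ?_
        rw [hcard t ht, Finset.prod_const_one, mul_one, Finset.prod_mul_distrib,
          Finset.prod_const]
    _ = ∏ k ∈ s, (c * r ^ (B k).card + 1) := (Finset.prod_add _ _ _).symm
    _ = ∏ k ∈ s, (1 + c * r ^ (B k).card) := by
        refine Finset.prod_congr rfl fun k _ => ?_; ring

/-- The moment generating function of the block-indicator sum. -/
lemma integral_exp_sum (hW : ∀ i, Measurable (W i))
    (hindep : ProbabilityTheory.iIndepFun W μ)
    (hr0 : 0 ≤ r) (hr : ∀ i, μ (W i ⁻¹' {true}) = ENNReal.ofReal r)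
    (s : Finset κ) (B : κ → Finset ι)
    (hdisj : ∀ k ∈ s, ∀ l ∈ s, k ≠ l → Disjoint (B k) (B l)) (t : ℝ) :
    ∫ ω, exp (t * ∑ k ∈ s, ∏ i ∈ B k, bi (W i ω)) ∂μ
      = ∏ k ∈ s, (1 + (exp t - 1) * r ^ (B k).card) := by
  have key : ∀ ω, exp (t * ∑ k ∈ s, ∏ i ∈ B k, bi (W i ω))
      = ∏ k ∈ s, (1 + (exp t - 1) * ∏ i ∈ B k, bi (W i ω)) := by
    intro ω
    rw [Finset.mul_sum, exp_sum]
    refine Finset.prod_congr rfl fun k _ => ?_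
    rcases prod_bi_mem (B k) ω with h | h <;> rw [h] <;> simp
  rw [show (fun ω => exp (t * ∑ k ∈ s, ∏ i ∈ B k, bi (W i ω)))
      = fun ω => ∏ k ∈ s, (1 + (exp t - 1) * ∏ i ∈ B k, bi (W i ω)) from funext key]
  exact integral_prod_one_add hW hindep hr0 hr s B hdisj _

omit [IsProbabilityMeasure μ] in
lemma integrable_exp_sum (hW : ∀ i, Measurable (W i)) [IsFiniteMeasure μ]
    (s : Finset κ) (B : κ → Finset ι) (t : ℝ) :
    Integrable (fun ω => exp (t * ∑ k ∈ s, ∏ i ∈ B k, bi (W i ω))) μ := by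
  have hmeas : Measurable (fun ω => exp (t * ∑ k ∈ s, ∏ i ∈ B k, bi (W i ω))) := by
    refine Real.measurable_exp.comp (Measurable.const_mul ?_ t)
    exact Finset.measurable_sum _ (fun k _ => measurable_prod_bi hW _)
  refine Integrable.mono' (integrable_const (exp (|t| * s.card)))
    hmeas.aestronglyMeasurable (ae_of_all _ fun ω => ?_)
  rw [Real.norm_eq_abs, abs_of_nonneg (exp_nonneg _), exp_le_exp]
  calc t * ∑ k ∈ s, ∏ i ∈ B k, bi (W i ω) ≤ |t * ∑ k ∈ s, ∏ i ∈ B k, bi (W i ω)| := le_abs_self _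
    _ = |t| * |∑ k ∈ s, ∏ i ∈ B k, bi (W i ω)| := abs_mul _ _
    _ ≤ |t| * s.card := by
        refine mul_le_mul_of_nonneg_left ?_ (abs_nonneg t)
        rw [abs_of_nonneg (Finset.sum_nonneg fun k _ => prod_bi_nonneg _ ω)]
        calc ∑ k ∈ s, ∏ i ∈ B k, bi (W i ω) ≤ ∑ k ∈ s, (1:ℝ) :=
              Finset.sum_le_sum fun k _ => prod_bi_le_one _ ω
          _ = s.card := by simp

/-- Chernoff upper-tail bound for a sum of block indicators. -/
lemma chernoff_upper (hW : ∀ i, Measurable (W i))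
    (hindep : ProbabilityTheory.iIndepFun W μ)
    (hr0 : 0 ≤ r) (hr1 : r ≤ 1) (hr : ∀ i, μ (W i ⁻¹' {true}) = ENNReal.ofReal r)
    (s : Finset κ) (B : κ → Finset ι)
    (hdisj : ∀ k ∈ s, ∀ l ∈ s, k ≠ l → Disjoint (B k) (B l))
    {q : ℝ} (hq : ∀ k ∈ s, r ^ (B k).card = q)
    {t : ℝ} (ht : 0 ≤ t) (ε : ℝ) :
    (μ {ω | ε ≤ ∑ k ∈ s, ∏ i ∈ B k, bi (W i ω)}).toReal
      ≤ exp (-t * ε + s.card * (q * (exp t - 1))) := by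
  have hmgf := ProbabilityTheory.measure_ge_le_exp_mul_mgf (μ := μ)
    (X := fun ω => ∑ k ∈ s, ∏ i ∈ B k, bi (W i ω)) ε ht (integrable_exp_sum hW s B t)
  refine hmgf.trans ?_
  have hmgf_eq : ProbabilityTheory.mgf (fun ω => ∑ k ∈ s, ∏ i ∈ B k, bi (W i ω)) μ t
      = ∏ k ∈ s, (1 + (exp t - 1) * r ^ (B k).card) :=
    integral_exp_sum hW hindep hr0 hr s B hdisj t
  rw [hmgf_eq, exp_add]
  refine mul_le_mul_of_nonneg_left ?_ (exp_nonneg _)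
  calc ∏ k ∈ s, (1 + (exp t - 1) * r ^ (B k).card)
      ≤ ∏ k ∈ s, exp ((exp t - 1) * r ^ (B k).card) := by
        refine Finset.prod_le_prod (fun k hk => ?_) (fun k hk => ?_)
        · have h1 : (0:ℝ) ≤ exp t - 1 := by
            have := Real.one_le_exp ht; linarith
          have h2 : (0:ℝ) ≤ r ^ (B k).card := pow_nonneg hr0 _
          nlinarith
        · rw [add_comm]; exact add_one_le_exp _
    _ = exp (∑ k ∈ s, (exp t - 1) * r ^ (B k).card) := (exp_sum _ _).symm
    _ = exp (s.card * (q * (exp t - 1))) := by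
        rw [Finset.sum_congr rfl (fun k hk => by rw [hq k hk])]
        rw [Finset.sum_const]
        ring_nf

/-- Chernoff lower-tail bound for a sum of block indicators. -/
lemma chernoff_lower (hW : ∀ i, Measurable (W i))
    (hindep : ProbabilityTheory.iIndepFun W μ)
    (hr0 : 0 ≤ r) (hr1 : r ≤ 1) (hr : ∀ i, μ (W i ⁻¹' {true}) = ENNReal.ofReal r)
    (s : Finset κ) (B : κ → Finset ι)
    (hdisj : ∀ k ∈ s, ∀ l ∈ s, k ≠ l → Disjoint (B k) (B l))
    {q : ℝ} (hq : ∀ k ∈ s, r ^ (B k).card = q)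
    {t : ℝ} (ht : t ≤ 0) (ε : ℝ) :
    (μ {ω | (∑ k ∈ s, ∏ i ∈ B k, bi (W i ω)) ≤ ε}).toReal
      ≤ exp (-t * ε + s.card * (q * (exp t - 1))) := by
  have hmgf := ProbabilityTheory.measure_le_le_exp_mul_mgf (μ := μ)
    (X := fun ω => ∑ k ∈ s, ∏ i ∈ B k, bi (W i ω)) ε ht (integrable_exp_sum hW s B t)
  refine hmgf.trans ?_
  have hmgf_eq : ProbabilityTheory.mgf (fun ω => ∑ k ∈ s, ∏ i ∈ B k, bi (W i ω)) μ t
      = ∏ k ∈ s, (1 + (exp t - 1) * r ^ (B k).card) :=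
    integral_exp_sum hW hindep hr0 hr s B hdisj t
  rw [hmgf_eq, exp_add]
  refine mul_le_mul_of_nonneg_left ?_ (exp_nonneg _)
  calc ∏ k ∈ s, (1 + (exp t - 1) * r ^ (B k).card)
      ≤ ∏ k ∈ s, exp ((exp t - 1) * r ^ (B k).card) := by
        refine Finset.prod_le_prod (fun k hk => ?_) (fun k hk => ?_)
        · have h1 : exp t ≤ 1 := Real.exp_le_one_iff.2 ht
          have h2 : (0:ℝ) ≤ r ^ (B k).card := pow_nonneg hr0 _
          have h3 : r ^ (B k).card ≤ 1 := pow_le_one₀ hr0 hr1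
          nlinarith [mul_nonneg h2 (exp_pos t).le, mul_le_one₀ h3 (exp_pos t).le h1]
        · rw [add_comm]; exact add_one_le_exp _
    _ = exp (∑ k ∈ s, (exp t - 1) * r ^ (B k).card) := (exp_sum _ _).symm
    _ = exp (s.card * (q * (exp t - 1))) := by
        rw [Finset.sum_congr rfl (fun k hk => by rw [hq k hk])]
        rw [Finset.sum_const]
        ring_nf

end Chernoff

/-- The index of the edge `{i,k}` in the global family. -/
def edge (n : ℕ) (i k : Fin n) : (m : ℕ) × {q : Fin m × Fin m // q.1 ≤ q.2} :=
  if h : i ≤ k then ⟨n, ⟨(i, k), h⟩⟩ else ⟨n, ⟨(k, i), le_of_not_ge h⟩⟩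

lemma edge_eval {Ω : Type*} (A : (n : ℕ) → Ω → Fin n → Fin n → Bool)
    (hsym : ∀ n ω (i j : Fin n), A n ω i j = A n ω j i) (n : ℕ) (ω : Ω) (i k : Fin n) :
    (fun s : (m : ℕ) × {q : Fin m × Fin m // q.1 ≤ q.2} =>
      A s.1 ω s.2.val.1 s.2.val.2) (edge n i k) = A n ω i k := by
  unfold edge
  split
  · rfl
  · exact hsym n ω k i

lemma edge_eq {n : ℕ} {i k i' k' : Fin n} (h : edge n i k = edge n i' k') :
    (i = i' ∧ k = k') ∨ (i = k' ∧ k = i') := by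
  unfold edge at h
  split at h <;> split at h <;>
    (simp only [Sigma.mk.inj_iff, heq_eq_eq, Subtype.mk.injEq, Prod.mk.injEq, true_and] at h) <;>
    tauto

section Arith
open Real

lemma exp_le_one_add_add_sq {x : ℝ} (hx : |x| ≤ 1) : Real.exp x ≤ 1 + x + x ^ 2 := by
  have h := Real.exp_bound hx (n := 2) (by norm_num)
  have h2 : ∑ m ∈ Finset.range 2, x ^ m / m.factorial = 1 + x := by
    simp [Finset.sum_range_succ]
  rw [h2] at h
  have h3 := (abs_sub_le_iff.1 h).1
  have h4 : |x| ^ 2 = x ^ 2 := sq_abs x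
  have h5 : ((2:ℕ).succ : ℝ) / ((2:ℕ).factorial * (2:ℕ)) = 3 / 4 := by
    norm_num [Nat.factorial]
  rw [h4, h5] at h3
  nlinarith [sq_nonneg x]

lemma pow15_div_le_exp {x : ℝ} (hx : 0 ≤ x) :
    x ^ 15 / (Nat.factorial 15 : ℝ) ≤ Real.exp x := by
  refine le_trans ?_ (Real.sum_le_exp_of_nonneg hx 16)
  refine Finset.single_le_sum (f := fun i => x ^ i / (Nat.factorial i : ℝ))
    (fun i _ => by positivity) (by norm_num : (15:ℕ) ∈ Finset.range 16)

lemma beta_le (n : ℕ) (hn : 1 ≤ n) : (n:ℝ) ^ ((2:ℝ)/3) ≤ (n:ℝ) := by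
  have h1 : (1:ℝ) ≤ (n:ℝ) := by exact_mod_cast hn
  have := Real.rpow_le_rpow_of_exponent_le h1 (by norm_num : (2:ℝ)/3 ≤ 1)
  rwa [Real.rpow_one] at this

lemma beta_sq (n : ℕ) (hn : 1 ≤ n) :
    ((n:ℝ) ^ ((2:ℝ)/3)) ^ 2 = (n:ℝ) ^ ((1:ℝ)/3) * (n:ℝ) := by
  have hn0 : (0:ℝ) < (n:ℝ) := by exact_mod_cast hn
  rw [sq, ← Real.rpow_add hn0, show (2:ℝ)/3 + 2/3 = 1/3 + 1 by norm_num,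
    Real.rpow_add hn0, Real.rpow_one]

lemma gamma_pow (n : ℕ) :
    ((n:ℝ) ^ ((1:ℝ)/3)) ^ (15:ℕ) = (n:ℝ) ^ (5:ℕ) := by
  rw [← Real.rpow_natCast ((n:ℝ) ^ ((1:ℝ)/3)) 15, ← Real.rpow_mul (Nat.cast_nonneg n),
    show (1:ℝ)/3 * (15:ℕ) = ((5:ℕ):ℝ) by norm_num, Real.rpow_natCast]

lemma gamma_nonneg (n : ℕ) : 0 ≤ (n:ℝ) ^ ((1:ℝ)/3) := Real.rpow_nonneg (Nat.cast_nonneg n) _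

lemma beta_nonneg (n : ℕ) : 0 ≤ (n:ℝ) ^ ((2:ℝ)/3) := Real.rpow_nonneg (Nat.cast_nonneg n) _

/-- Row-tail exponent estimate. -/
lemma row_arith {p : ℝ} (hp0 : 0 < p) (hp1 : p ≤ 1) {n : ℕ} (hn : 2 ≤ n) :
    -((n:ℝ) ^ ((2:ℝ)/3) / (2*n)) * (p * ((n:ℝ) + (n:ℝ) ^ ((2:ℝ)/3)))
      + (n:ℝ) * (p * (Real.exp ((n:ℝ) ^ ((2:ℝ)/3) / (2*n)) - 1))
    ≤ 1 - p ^ 2 * (n:ℝ) ^ ((1:ℝ)/3) / 4 := by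
  set β := (n:ℝ) ^ ((2:ℝ)/3) with hβ
  set γ := (n:ℝ) ^ ((1:ℝ)/3) with hγ
  have hn1 : 1 ≤ n := le_trans (by norm_num) hn
  have hn0 : (0:ℝ) < (n:ℝ) := by exact_mod_cast hn1
  have hβ0 : 0 ≤ β := beta_nonneg n
  have hβn : β ≤ n := beta_le n hn1
  have hγ0 : 0 ≤ γ := gamma_nonneg n
  have hb2 : β ^ 2 = γ * n := beta_sq n hn1
  set t := β / (2*n) with ht
  have ht0 : 0 ≤ t := by positivity
  have ht1 : t ≤ 1 := by
    rw [ht, div_le_one (by positivity)]; linarith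
  have hexp : Real.exp t ≤ 1 + t + t ^ 2 :=
    exp_le_one_add_add_sq (by rw [abs_of_nonneg ht0]; exact ht1)
  have key : -t * (p * ((n:ℝ) + β)) + (n:ℝ) * (p * (Real.exp t - 1))
      ≤ -t * (p * ((n:ℝ) + β)) + (n:ℝ) * (p * (t + t ^ 2)) := by
    have : Real.exp t - 1 ≤ t + t ^ 2 := by linarith
    nlinarith [mul_nonneg hn0.le hp0.le]
  refine key.trans ?_
  have hmain : -t * (p * ((n:ℝ) + β)) + (n:ℝ) * (p * (t + t ^ 2)) = -p * γ / 4 := by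
    have h4 : (n:ℝ) * t ^ 2 = β ^ 2 / (4 * n) := by
      rw [ht]; field_simp; ring
    have h5 : t * β = β ^ 2 / (2 * n) := by
      rw [ht]; field_simp
    have h6 : β ^ 2 / (4*n) = γ / 4 := by rw [hb2]; field_simp
    have h7 : β ^ 2 / (2*n) = γ / 2 := by rw [hb2]; field_simp
    have expand : -t * (p * ((n:ℝ) + β)) + (n:ℝ) * (p * (t + t ^ 2))
        = p * ((n:ℝ) * t ^ 2 - t * β) := by ring
    rw [expand, h4, h5, h6, h7]; ring
  rw [hmain]
  nlinarith [mul_nonneg hp0.le hγ0, mul_nonneg (mul_nonneg hp0.le hp0.le) hγ0]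

/-- Codegree-tail exponent estimate. -/
lemma co_arith {p : ℝ} (hp0 : 0 < p) (hp1 : p ≤ 1) {n : ℕ} (hn : 2 ≤ n) :
    -(-((n:ℝ) ^ ((2:ℝ)/3) / (2*n))) * (p ^ 2 * ((n:ℝ) - (n:ℝ) ^ ((2:ℝ)/3)))
      + ((n - 2 : ℕ) : ℝ) * (p ^ 2 * (Real.exp (-((n:ℝ) ^ ((2:ℝ)/3) / (2*n))) - 1))
    ≤ 1 - p ^ 2 * (n:ℝ) ^ ((1:ℝ)/3) / 4 := by
  set β := (n:ℝ) ^ ((2:ℝ)/3) with hβ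
  set γ := (n:ℝ) ^ ((1:ℝ)/3) with hγ
  have hn1 : 1 ≤ n := le_trans (by norm_num) hn
  have hn0 : (0:ℝ) < (n:ℝ) := by exact_mod_cast hn1
  have hn2 : (2:ℝ) ≤ (n:ℝ) := by exact_mod_cast hn
  have hβ0 : 0 ≤ β := beta_nonneg n
  have hβn : β ≤ n := beta_le n hn1
  have hγ0 : 0 ≤ γ := gamma_nonneg n
  have hb2 : β ^ 2 = γ * n := beta_sq n hn1
  have hcast : ((n - 2 : ℕ) : ℝ) = (n:ℝ) - 2 := by
    rw [Nat.cast_sub hn]; norm_num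
  set t := β / (2*n) with ht
  have ht0 : 0 ≤ t := by positivity
  have ht1 : t ≤ 1 := by rw [ht, div_le_one (by positivity)]; linarith
  have hexp : Real.exp (-t) ≤ 1 - t + t ^ 2 := by
    have := exp_le_one_add_add_sq (x := -t) (by rw [abs_neg, abs_of_nonneg ht0]; exact ht1)
    calc Real.exp (-t) ≤ 1 + (-t) + (-t) ^ 2 := this
      _ = 1 - t + t ^ 2 := by ring
  have hp2 : 0 ≤ p ^ 2 := sq_nonneg p
  rw [hcast]
  have key : -(-t) * (p ^ 2 * ((n:ℝ) - β)) + ((n:ℝ) - 2) * (p ^ 2 * (Real.exp (-t) - 1))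
      ≤ t * (p ^ 2 * ((n:ℝ) - β)) + ((n:ℝ) - 2) * (p ^ 2 * (-t + t ^ 2)) := by
    have h1 : Real.exp (-t) - 1 ≤ -t + t ^ 2 := by linarith
    have h2 : (0:ℝ) ≤ (n:ℝ) - 2 := by linarith
    nlinarith [mul_nonneg h2 hp2]
  refine key.trans ?_
  have hnt2 : (n:ℝ) * t ^ 2 = γ / 4 := by
    have : (n:ℝ) * t ^ 2 = β ^ 2 / (4 * n) := by rw [ht]; field_simp; ring
    rw [this, hb2]; field_simp
  have htβ : t * β = γ / 2 := by
    have : t * β = β ^ 2 / (2 * n) := by rw [ht]; field_simp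
    rw [this, hb2]; field_simp
  have expand : t * (p ^ 2 * ((n:ℝ) - β)) + ((n:ℝ) - 2) * (p ^ 2 * (-t + t ^ 2))
      = p ^ 2 * ((n:ℝ) * t ^ 2 - t * β + 2 * t - 2 * t ^ 2) := by ring
  rw [expand, hnt2, htβ]
  have hfinal : γ / 4 - γ / 2 + 2 * t - 2 * t ^ 2 ≤ 1 - γ / 4 := by
    nlinarith [sq_nonneg t]
  calc p ^ 2 * (γ / 4 - γ / 2 + 2 * t - 2 * t ^ 2) ≤ p ^ 2 * (1 - γ / 4) :=
        mul_le_mul_of_nonneg_left hfinal hp2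
    _ ≤ 1 - p ^ 2 * γ / 4 := by nlinarith [sq_nonneg p, sq_nonneg (1-p)]

/-- Eventual tail smallness. -/
lemma tail_arith {p : ℝ} (hp0 : 0 < p) (hp1 : p ≤ 1) :
    ∃ N : ℕ, 2 ≤ N ∧ ∀ n, N ≤ n →
      ((n:ℝ) + (n:ℝ) ^ 2) * Real.exp (1 - p ^ 2 * (n:ℝ) ^ ((1:ℝ)/3) / 4)
        ≤ (((n:ℝ)) ^ 2)⁻¹ := by
  set a := p ^ 2 / 4 with ha
  have ha0 : 0 < a := by positivity
  set C : ℝ := 6 * (Nat.factorial 15 : ℝ) / a ^ 15 with hC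
  have hC0 : 0 < C := by positivity
  refine ⟨max 2 (⌈C⌉₊ + 1), le_max_left _ _, fun n hn => ?_⟩
  have hn2 : 2 ≤ n := le_trans (le_max_left _ _) hn
  have hnC : C ≤ (n:ℝ) := by
    have h1 : (⌈C⌉₊ + 1 : ℕ) ≤ n := le_trans (le_max_right _ _) hn
    have := Nat.le_ceil C
    have h2 : ((⌈C⌉₊ + 1 : ℕ) : ℝ) ≤ (n:ℝ) := by exact_mod_cast h1
    push_cast at h2
    linarith
  have hn0 : (0:ℝ) < (n:ℝ) := by
    have : (0:ℕ) < n := lt_of_lt_of_le (by norm_num) hn2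
    exact_mod_cast this
  have hn1 : (1:ℝ) ≤ (n:ℝ) := by
    have : (1:ℕ) ≤ n := le_trans (by norm_num) hn2
    exact_mod_cast this
  set γ := (n:ℝ) ^ ((1:ℝ)/3) with hγ
  have hγ0 : 0 ≤ γ := gamma_nonneg n
  have hE : a ^ 15 * (n:ℝ) ^ (5:ℕ) / (Nat.factorial 15 : ℝ) ≤ Real.exp (a * γ) := by
    have h1 := pow15_div_le_exp (mul_nonneg ha0.le hγ0)
    have h2 : (a * γ) ^ 15 = a ^ 15 * (n:ℝ) ^ (5:ℕ) := by
      rw [mul_pow, gamma_pow n]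
    rwa [h2] at h1
  have hfact0 : (0:ℝ) < (Nat.factorial 15 : ℝ) := by positivity
  have hE2 : 6 * (n:ℝ) ^ 4 ≤ Real.exp (a * γ) := by
    refine le_trans ?_ hE
    rw [le_div_iff₀ hfact0]
    have h5 : (n:ℝ) ^ (5:ℕ) = (n:ℝ) ^ 4 * (n:ℝ) := by ring
    rw [h5]
    have hCa : C * a ^ 15 = 6 * (Nat.factorial 15 : ℝ) := by
      rw [hC]; field_simp
    nlinarith [pow_nonneg hn0.le 4, pow_pos ha0 15, mul_le_mul_of_nonneg_left hnC
      (le_of_lt (mul_pos (pow_pos ha0 15) (pow_pos hn0 4)))]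
  have hexp1 : Real.exp 1 ≤ 3 := by
    have := Real.exp_one_lt_d9
    linarith
  have hEpos : (0:ℝ) < Real.exp (a * γ) := Real.exp_pos _
  have hkey : Real.exp (1 - a * γ) ≤ 3 / (6 * (n:ℝ) ^ 4) := by
    rw [Real.exp_sub, div_le_div_iff₀ hEpos (by positivity)]
    calc Real.exp 1 * (6 * (n:ℝ) ^ 4) ≤ 3 * (6 * (n:ℝ)^4) := by
          nlinarith [pow_nonneg hn0.le 4]
      _ ≤ 3 * Real.exp (a * γ) := by nlinarith
  have hgoal : ((n:ℝ) + (n:ℝ) ^ 2) * Real.exp (1 - a * γ) ≤ ((n:ℝ) ^ 2)⁻¹ := by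
    have h1 : ((n:ℝ) + (n:ℝ) ^ 2) ≤ 2 * (n:ℝ) ^ 2 := by nlinarith
    have h2 : ((n:ℝ) + (n:ℝ) ^ 2) * Real.exp (1 - a * γ)
        ≤ 2 * (n:ℝ)^2 * (3 / (6 * (n:ℝ)^4)) := by
      have he0 : 0 ≤ Real.exp (1 - a*γ) := (Real.exp_pos _).le
      have := mul_le_mul h1 hkey he0 (by positivity)
      linarith
    refine h2.trans ?_
    have heq : 2 * (n:ℝ)^2 * (3 / (6 * (n:ℝ)^4)) = ((n:ℝ)^2)⁻¹ := by
      field_simp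
      ring
    rw [heq]
  have harg : 1 - p ^ 2 * γ / 4 = 1 - a * γ := by rw [ha]; ring
  rw [harg]
  exact hgoal

end Arith

section Bounds
open Real

variable {Ω : Type*} [MeasurableSpace Ω] {μ : Measure Ω} [IsProbabilityMeasure μ]
  {p : ℝ} {A : (n : ℕ) → Ω → Fin n → Fin n → Bool}

lemma row_bound
    (hp0 : 0 < p) (hp1 : p ≤ 1)
    (hmeas : ∀ n (i j : Fin n), Measurable fun ω => A n ω i j)
    (hsym : ∀ n ω (i j : Fin n), A n ω i j = A n ω j i)
    (hindep : ProbabilityTheory.iIndepFun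
      (fun s : (n : ℕ) × {q : Fin n × Fin n // q.1 ≤ q.2} =>
        fun ω => A s.1 ω s.2.val.1 s.2.val.2) μ)
    (hWlaw : ∀ s : (n : ℕ) × {q : Fin n × Fin n // q.1 ≤ q.2},
      μ ((fun ω => A s.1 ω s.2.val.1 s.2.val.2) ⁻¹' {true}) = ENNReal.ofReal p)
    {n : ℕ} (hn : 2 ≤ n) (i : Fin n) :
    (μ {ω | p * ((n:ℝ) + (n:ℝ) ^ ((2:ℝ)/3))
        ≤ ∑ k, (if A n ω i k then (1:ℝ) else 0)}).toReal
      ≤ Real.exp (1 - p ^ 2 * (n:ℝ) ^ ((1:ℝ)/3) / 4) := by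
  classical
  set W : ((m : ℕ) × {q : Fin m × Fin m // q.1 ≤ q.2}) → Ω → Bool :=
    fun s ω => A s.1 ω s.2.val.1 s.2.val.2 with hW
  have hWmeas : ∀ s, Measurable (W s) := fun s => hmeas _ _ _
  set B : Fin n → Finset ((m : ℕ) × {q : Fin m × Fin m // q.1 ≤ q.2}) :=
    fun k => {edge n i k} with hB
  have hdisj : ∀ k ∈ (Finset.univ : Finset (Fin n)), ∀ l ∈ Finset.univ, k ≠ l →
      Disjoint (B k) (B l) := by
    intro k _ l _ hkl
    simp only [hB, Finset.disjoint_singleton]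
    intro he
    rcases edge_eq he with ⟨_, h2⟩ | ⟨h1, h2⟩
    · exact hkl h2
    · exact hkl (h2.trans h1)
  have hq : ∀ k ∈ (Finset.univ : Finset (Fin n)), p ^ (B k).card = p := by
    intro k _; simp [hB]
  have hWe : ∀ (ω : Ω) (k : Fin n), W (edge n i k) ω = A n ω i k :=
    fun ω k => edge_eval A hsym n ω i k
  have hset : {ω | p * ((n:ℝ) + (n:ℝ) ^ ((2:ℝ)/3)) ≤ ∑ k, (if A n ω i k then (1:ℝ) else 0)}
      = {ω | p * ((n:ℝ) + (n:ℝ) ^ ((2:ℝ)/3))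
          ≤ ∑ k ∈ Finset.univ, ∏ e ∈ B k, bi (W e ω)} := by
    ext ω
    simp only [Set.mem_setOf_eq]
    have hterm : ∀ k : Fin n, (∏ e ∈ B k, bi (W e ω)) = (if A n ω i k then (1:ℝ) else 0) := by
      intro k
      rw [hB, Finset.prod_singleton, hWe ω k]
      rfl
    rw [Finset.sum_congr rfl (fun k _ => hterm k)]
  rw [hset]
  have hch := chernoff_upper (μ := μ) hWmeas hindep hp0.le hp1 hWlaw
    Finset.univ B hdisj hq (t := (n:ℝ) ^ ((2:ℝ)/3) / (2*(n:ℝ))) (by positivity)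
    (p * ((n:ℝ) + (n:ℝ) ^ ((2:ℝ)/3)))
  refine hch.trans ?_
  rw [Finset.card_univ, Fintype.card_fin]
  exact Real.exp_le_exp.2 (row_arith hp0 hp1 hn)

lemma co_bound
    (hp0 : 0 < p) (hp1 : p ≤ 1)
    (hmeas : ∀ n (i j : Fin n), Measurable fun ω => A n ω i j)
    (hsym : ∀ n ω (i j : Fin n), A n ω i j = A n ω j i)
    (hindep : ProbabilityTheory.iIndepFun
      (fun s : (n : ℕ) × {q : Fin n × Fin n // q.1 ≤ q.2} =>
        fun ω => A s.1 ω s.2.val.1 s.2.val.2) μ)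
    (hWlaw : ∀ s : (n : ℕ) × {q : Fin n × Fin n // q.1 ≤ q.2},
      μ ((fun ω => A s.1 ω s.2.val.1 s.2.val.2) ⁻¹' {true}) = ENNReal.ofReal p)
    {n : ℕ} (hn : 2 ≤ n) {i j : Fin n} (hij : i ≠ j) :
    (μ {ω | (∑ k ∈ Finset.univ \ ({i, j} : Finset (Fin n)),
          (if A n ω i k then (1:ℝ) else 0) * (if A n ω j k then (1:ℝ) else 0))
        ≤ p ^ 2 * ((n:ℝ) - (n:ℝ) ^ ((2:ℝ)/3))}).toReal
      ≤ Real.exp (1 - p ^ 2 * (n:ℝ) ^ ((1:ℝ)/3) / 4) := by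
  classical
  set W : ((m : ℕ) × {q : Fin m × Fin m // q.1 ≤ q.2}) → Ω → Bool :=
    fun s ω => A s.1 ω s.2.val.1 s.2.val.2 with hW
  have hWmeas : ∀ s, Measurable (W s) := fun s => hmeas _ _ _
  set B : Fin n → Finset ((m : ℕ) × {q : Fin m × Fin m // q.1 ≤ q.2}) :=
    fun k => {edge n i k, edge n j k} with hB
  set s : Finset (Fin n) := Finset.univ \ ({i, j} : Finset (Fin n)) with hs
  have hmem : ∀ k, k ∈ s → k ≠ i ∧ k ≠ j := by
    intro k hk
    rw [hs, Finset.mem_sdiff, Finset.mem_insert, Finset.mem_singleton] at hk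
    exact ⟨fun h => hk.2 (Or.inl h), fun h => hk.2 (Or.inr h)⟩
  have hne : ∀ k ∈ s, edge n i k ≠ edge n j k := by
    intro k hk he
    rcases edge_eq he with ⟨h1, _⟩ | ⟨h1, h2⟩
    · exact hij h1
    · exact (hmem k hk).2 h2
  have hdisj : ∀ k ∈ s, ∀ l ∈ s, k ≠ l → Disjoint (B k) (B l) := by
    intro k hk l hl hkl
    rw [Finset.disjoint_left]
    intro e he he'
    rw [hB, Finset.mem_insert, Finset.mem_singleton] at he he'
    rcases he with rfl | rfl <;> rcases he' with h | h
    · rcases edge_eq h with ⟨_, h2⟩ | ⟨_, h2⟩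
      · exact hkl h2
      · exact (hmem k hk).1 h2
    · rcases edge_eq h with ⟨h1, _⟩ | ⟨_, h2⟩
      · exact hij h1
      · exact (hmem k hk).2 h2
    · rcases edge_eq h with ⟨h1, _⟩ | ⟨h1, h2⟩
      · exact hij h1.symm
      · exact (hmem k hk).1 h2
    · rcases edge_eq h with ⟨_, h2⟩ | ⟨h1, h2⟩
      · exact hkl h2
      · exact (hmem k hk).2 h2
  have hq : ∀ k ∈ s, p ^ (B k).card = p ^ 2 := by
    intro k hk
    rw [hB]
    rw [Finset.card_pair (hne k hk)]
  have hWei : ∀ (ω : Ω) (k : Fin n), W (edge n i k) ω = A n ω i k :=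
    fun ω k => edge_eval A hsym n ω i k
  have hWej : ∀ (ω : Ω) (k : Fin n), W (edge n j k) ω = A n ω j k :=
    fun ω k => edge_eval A hsym n ω j k
  have hset : {ω | (∑ k ∈ Finset.univ \ ({i, j} : Finset (Fin n)),
          (if A n ω i k then (1:ℝ) else 0) * (if A n ω j k then (1:ℝ) else 0))
        ≤ p ^ 2 * ((n:ℝ) - (n:ℝ) ^ ((2:ℝ)/3))}
      = {ω | (∑ k ∈ s, ∏ e ∈ B k, bi (W e ω)) ≤ p ^ 2 * ((n:ℝ) - (n:ℝ) ^ ((2:ℝ)/3))} := by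
    ext ω
    simp only [Set.mem_setOf_eq, hs]
    have hterm : ∀ k ∈ Finset.univ \ ({i, j} : Finset (Fin n)),
        (if A n ω i k then (1:ℝ) else 0) * (if A n ω j k then (1:ℝ) else 0)
          = ∏ e ∈ B k, bi (W e ω) := by
      intro k hk
      rw [hB, Finset.prod_pair (hne k (by rw [hs]; exact hk)), hWei ω k, hWej ω k]
      rfl
    rw [Finset.sum_congr rfl hterm]
  rw [hset]
  have hch := chernoff_lower (μ := μ) hWmeas hindep hp0.le hp1 hWlaw
    s B hdisj hq (t := -((n:ℝ) ^ ((2:ℝ)/3) / (2*(n:ℝ))))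
    (neg_nonpos.2 (by positivity))
    (p ^ 2 * ((n:ℝ) - (n:ℝ) ^ ((2:ℝ)/3)))
  refine hch.trans ?_
  have hcard : s.card = n - 2 := by
    rw [hs, Finset.card_sdiff_of_subset (Finset.subset_univ _), Finset.card_univ, Fintype.card_fin,
      Finset.card_pair hij]
  rw [hcard]
  exact Real.exp_le_exp.2 (co_arith hp0 hp1 hn)

end Bounds

end ER19

open ER19 in
/-- Almost sure eventual degree and codegree bounds for Erdős–Rényi graphs: if, on a
common probability space, `A n` is for each `n` the (symmetric) adjacency matrix of
`G(n,p)` with all edge indicators (across all `n` and all pairs `i ≤ j`) independent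
`Bernoulli(p)` variables, then almost surely, for all sufficiently large `n`, every
row sum is at most `p(n + n^{2/3})` and every codegree sum (over `i ≠ j`) is at least
`p²(n − n^{2/3})`. -/
theorem statement19 {Ω : Type*} [MeasurableSpace Ω] (μ : Measure Ω)
    [IsProbabilityMeasure μ] (p : ℝ) (hp : p ∈ Ioc (0:ℝ) 1)
    (A : (n : ℕ) → Ω → Fin n → Fin n → Bool)
    (hmeas : ∀ n (i j : Fin n), Measurable fun ω => A n ω i j)
    (hsym : ∀ n ω (i j : Fin n), A n ω i j = A n ω j i)
    (hindep : ProbabilityTheory.iIndepFun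
      (fun s : (n : ℕ) × {q : Fin n × Fin n // q.1 ≤ q.2} =>
        fun ω => A s.1 ω s.2.val.1 s.2.val.2) μ)
    (hlaw : ∀ s : (n : ℕ) × {q : Fin n × Fin n // q.1 ≤ q.2},
      μ.map (fun ω => A s.1 ω s.2.val.1 s.2.val.2) = bern p) :
    ∀ᵐ ω ∂μ, ∃ N : ℕ, ∀ n ≥ N,
      (∀ i : Fin n,
        (∑ k, if A n ω i k then (1:ℝ) else 0) ≤ p * ((n : ℝ) + (n : ℝ) ^ ((2:ℝ)/3))) ∧
      (∀ i j : Fin n, i ≠ j →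
        p ^ 2 * ((n : ℝ) - (n : ℝ) ^ ((2:ℝ)/3)) ≤
          ∑ k, min (if A n ω i k then (1:ℝ) else 0) (if A n ω j k then (1:ℝ) else 0)) := by
  classical
  obtain ⟨hp0, hp1⟩ := hp
  have hWlaw : ∀ s : (n : ℕ) × {q : Fin n × Fin n // q.1 ≤ q.2},
      μ ((fun ω => A s.1 ω s.2.val.1 s.2.val.2) ⁻¹' {true}) = ENNReal.ofReal p := by
    intro s
    rw [← Measure.map_apply (hmeas _ _ _) (measurableSet_singleton true), hlaw s]
    unfold bern
    rw [PMF.toMeasure_apply_singleton _ _ (measurableSet_singleton true),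
      PMF.bernoulli_apply]
    simp only [Bool.cond_true]
    rw [min_eq_left (by simpa using hp1 : Real.toNNReal p ≤ 1)]; rfl
  set Bad : ℕ → Set Ω := fun n => {ω | ¬ ((∀ i : Fin n,
      (∑ k, if A n ω i k then (1:ℝ) else 0) ≤ p * ((n : ℝ) + (n : ℝ) ^ ((2:ℝ)/3))) ∧
      (∀ i j : Fin n, i ≠ j →
        p ^ 2 * ((n : ℝ) - (n : ℝ) ^ ((2:ℝ)/3)) ≤
          ∑ k, min (if A n ω i k then (1:ℝ) else 0) (if A n ω j k then (1:ℝ) else 0)))}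
    with hBad
  obtain ⟨N, hN2, htail⟩ := ER19.tail_arith hp0 hp1
  have hD0 : ∀ n : ℕ, 0 ≤ Real.exp (1 - p ^ 2 * (n:ℝ) ^ ((1:ℝ)/3) / 4) :=
    fun n => (Real.exp_pos _).le
  have hBadMeas : ∀ n, N ≤ n → μ (Bad n) ≤ ENNReal.ofReal (((n:ℝ)^2)⁻¹) := by
    intro n hn
    have hn2 : 2 ≤ n := le_trans hN2 hn
    set D : ℝ := Real.exp (1 - p ^ 2 * (n:ℝ) ^ ((1:ℝ)/3) / 4) with hD
    set RowSet : Fin n → Set Ω := fun i =>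
      {ω | p * ((n:ℝ) + (n:ℝ) ^ ((2:ℝ)/3)) ≤ ∑ k, (if A n ω i k then (1:ℝ) else 0)}
      with hRow
    set CoSet : Fin n × Fin n → Set Ω := fun q =>
      if q.1 = q.2 then ∅ else
      {ω | (∑ k ∈ Finset.univ \ ({q.1, q.2} : Finset (Fin n)),
          (if A n ω q.1 k then (1:ℝ) else 0) * (if A n ω q.2 k then (1:ℝ) else 0))
        ≤ p ^ 2 * ((n:ℝ) - (n:ℝ) ^ ((2:ℝ)/3))} with hCo
    have hRowLe : ∀ i : Fin n, μ (RowSet i) ≤ ENNReal.ofReal D := by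
      intro i
      have h1 := ER19.row_bound hp0 hp1 hmeas hsym hindep hWlaw hn2 i
      calc μ (RowSet i) = ENNReal.ofReal ((μ (RowSet i)).toReal) :=
            (ENNReal.ofReal_toReal (measure_ne_top _ _)).symm
        _ ≤ ENNReal.ofReal D := ENNReal.ofReal_le_ofReal h1
    have hCoLe : ∀ q : Fin n × Fin n, μ (CoSet q) ≤ ENNReal.ofReal D := by
      intro q
      rw [hCo]
      by_cases hq : q.1 = q.2
      · simp [hq]
      · simp only [if_neg hq]
        have h1 := ER19.co_bound hp0 hp1 hmeas hsym hindep hWlaw hn2 hq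
        calc μ _ = ENNReal.ofReal ((μ _).toReal) :=
              (ENNReal.ofReal_toReal (measure_ne_top _ _)).symm
          _ ≤ ENNReal.ofReal D := ENNReal.ofReal_le_ofReal h1
    have hsub : Bad n ⊆ (⋃ i ∈ (Finset.univ : Finset (Fin n)), RowSet i)
        ∪ (⋃ q ∈ (Finset.univ : Finset (Fin n × Fin n)), CoSet q) := by
      intro ω hω
      rw [hBad, Set.mem_setOf_eq] at hω
      push_neg at hω
      by_cases hrow : ∀ i : Fin n,
          (∑ k, if A n ω i k then (1:ℝ) else 0) ≤ p * ((n : ℝ) + (n : ℝ) ^ ((2:ℝ)/3))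
      · obtain ⟨i, j, hij, hlt⟩ := hω hrow
        right
        refine Set.mem_iUnion₂.2 ⟨(i, j), Finset.mem_univ _, ?_⟩
        rw [hCo]
        simp only [if_neg hij]
        rw [Set.mem_setOf_eq]
        have hmin : ∀ k : Fin n, min (if A n ω i k then (1:ℝ) else 0)
            (if A n ω j k then (1:ℝ) else 0)
            = (if A n ω i k then (1:ℝ) else 0) * (if A n ω j k then (1:ℝ) else 0) := by
          intro k
          cases A n ω i k <;> cases A n ω j k <;> simp
        have hfull : (∑ k, min (if A n ω i k then (1:ℝ) else 0)
              (if A n ω j k then (1:ℝ) else 0))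
            = ∑ k, (if A n ω i k then (1:ℝ) else 0) * (if A n ω j k then (1:ℝ) else 0) :=
          Finset.sum_congr rfl (fun k _ => hmin k)
        have htrunc : (∑ k ∈ Finset.univ \ ({i, j} : Finset (Fin n)),
              (if A n ω i k then (1:ℝ) else 0) * (if A n ω j k then (1:ℝ) else 0))
            ≤ ∑ k, (if A n ω i k then (1:ℝ) else 0) * (if A n ω j k then (1:ℝ) else 0) := by
          refine Finset.sum_le_sum_of_subset_of_nonneg (Finset.sdiff_subset) ?_
          intro k _ _
          have h1 : (0:ℝ) ≤ (if A n ω i k then (1:ℝ) else 0) := by split <;> norm_num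
          have h2 : (0:ℝ) ≤ (if A n ω j k then (1:ℝ) else 0) := by split <;> norm_num
          exact mul_nonneg h1 h2
        rw [hfull] at hlt
        exact le_of_lt (lt_of_le_of_lt htrunc hlt)
      · push_neg at hrow
        obtain ⟨i, hi⟩ := hrow
        left
        exact Set.mem_iUnion₂.2 ⟨i, Finset.mem_univ _, le_of_lt hi⟩
    have hmes : μ (Bad n) ≤ (n : ENNReal) * ENNReal.ofReal D
        + ((n : ENNReal) * (n : ENNReal)) * ENNReal.ofReal D := by
      refine le_trans (measure_mono hsub) ?_
      refine le_trans (measure_union_le _ _) ?_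
      have h1 : μ (⋃ i ∈ (Finset.univ : Finset (Fin n)), RowSet i)
          ≤ (n : ENNReal) * ENNReal.ofReal D := by
        refine le_trans (measure_biUnion_finset_le _ _) ?_
        calc ∑ i ∈ Finset.univ, μ (RowSet i)
            ≤ ∑ _i ∈ (Finset.univ : Finset (Fin n)), ENNReal.ofReal D :=
              Finset.sum_le_sum (fun i _ => hRowLe i)
          _ = (n : ENNReal) * ENNReal.ofReal D := by
              rw [Finset.sum_const, Finset.card_univ, Fintype.card_fin, nsmul_eq_mul]
      have h2 : μ (⋃ q ∈ (Finset.univ : Finset (Fin n × Fin n)), CoSet q)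
          ≤ ((n : ENNReal) * (n : ENNReal)) * ENNReal.ofReal D := by
        refine le_trans (measure_biUnion_finset_le _ _) ?_
        calc ∑ q ∈ Finset.univ, μ (CoSet q)
            ≤ ∑ _q ∈ (Finset.univ : Finset (Fin n × Fin n)), ENNReal.ofReal D :=
              Finset.sum_le_sum (fun q _ => hCoLe q)
          _ = ((n : ENNReal) * (n : ENNReal)) * ENNReal.ofReal D := by
              rw [Finset.sum_const, Finset.card_univ, Fintype.card_prod, Fintype.card_fin,
                nsmul_eq_mul]
              push_cast
              ring
      exact add_le_add h1 h2
    refine le_trans hmes ?_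
    have hcast : (n : ENNReal) = ENNReal.ofReal (n : ℝ) := (ENNReal.ofReal_natCast n).symm
    rw [hcast, ← ENNReal.ofReal_mul (Nat.cast_nonneg n),
      ← ENNReal.ofReal_mul (Nat.cast_nonneg n),
      ← ENNReal.ofReal_mul (mul_nonneg (Nat.cast_nonneg n) (Nat.cast_nonneg n)),
      ← ENNReal.ofReal_add (by positivity) (by positivity)]
    refine ENNReal.ofReal_le_ofReal ?_
    have := htail n hn
    calc (n:ℝ) * D + (n:ℝ) * (n:ℝ) * D = ((n:ℝ) + (n:ℝ)^2) * D := by ring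
      _ ≤ (((n:ℝ))^2)⁻¹ := this
  have hsum : ∑' n, μ (Bad n) ≠ ⊤ := by
    have hle : ∀ n : ℕ, μ (Bad n)
        ≤ (if n < N then (1:ENNReal) else 0) + ENNReal.ofReal (((n:ℝ)^2)⁻¹) := by
      intro n
      by_cases h : n < N
      · rw [if_pos h]
        exact le_add_of_le_of_nonneg prob_le_one zero_le
      · rw [if_neg h, zero_add]
        exact hBadMeas n (not_lt.1 h)
    refine ne_top_of_le_ne_top ?_ (ENNReal.tsum_le_tsum hle)
    rw [ENNReal.tsum_add]
    refine (ENNReal.add_ne_top).2 ⟨?_, ?_⟩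
    · have heq : ∑' n : ℕ, (if n < N then (1:ENNReal) else 0)
          = ∑ n ∈ Finset.range N, (if n < N then (1:ENNReal) else 0) := by
        refine tsum_eq_sum ?_
        intro b hb
        rw [if_neg (fun hlt => hb (Finset.mem_range.2 hlt))]
      rw [heq]
      exact (ENNReal.sum_lt_top.2 (fun a _ => by split <;> simp)).ne
    · have hnn : ∀ n : ℕ, 0 ≤ ((n:ℝ)^2)⁻¹ := fun n => by positivity
      have hsum2 : Summable (fun n : ℕ => (((n:ℝ))^2)⁻¹) :=
        Real.summable_nat_pow_inv.2 (by norm_num)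
      rw [← ENNReal.ofReal_tsum_of_nonneg hnn hsum2]
      exact ENNReal.ofReal_ne_top
  have hae := MeasureTheory.ae_finite_setOf_mem (μ := μ) hsum
  filter_upwards [hae] with ω hω
  obtain ⟨M, hM⟩ := hω.bddAbove
  refine ⟨M + 1, fun n hn => ?_⟩
  by_contra hcon
  have hmem : n ∈ {m : ℕ | ω ∈ Bad m} := by
    rw [Set.mem_setOf_eq, hBad, Set.mem_setOf_eq]
    exact hcon
  have := hM hmem
  omega
end
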